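/- arXiv:1210.2001 — 3 statements merged into one kernel-verified Lean document; each statement's English description precedes it below -/
import Mathlib

section
/- For every integer k ≥ 2 there is a constant C_k such that for all real x ≥ 1, the number L_k(x) of composite integers n ≤ x satisfying φ(n) ∣ (n − 1)^k is at most C_k · x^{1 - 1/(4k - 1)}. -/
open Finset

lemma ceil_div_le {k a : ℕ} (hk : 1 ≤ k) (hb : 1 ≤ a) : (a + k - 1) / k ≤ a := by
  rw [Nat.div_le_iff_le_mul_add_pred (by omega)]
  have : a + k ≤ a * k + 1 := by nlinarith
  have h2 : k * a = a * k := mul_comm _ _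
  omega

lemma le_mul_ceil_div {k a : ℕ} (hk : 1 ≤ k) : a ≤ k * ((a + k - 1) / k) := by
  have h := Nat.div_add_mod (a + k - 1) k
  have h2 := Nat.mod_lt (a + k - 1) (show 0 < k by omega)
  omega

lemma ceil_div_le_of_le_mul {k a b : ℕ} (hk : 1 ≤ k) (h : a ≤ k * b) : (a + k - 1) / k ≤ b := by
  rw [Nat.div_le_iff_le_mul_add_pred (by omega)]
  omega

/-- The `k`-th "power kernel" of `D`. -/
def kap (k D : ℕ) : ℕ := ∏ p ∈ D.primeFactors, p ^ ((D.factorization p + k - 1) / k)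

lemma kap_pos (k D : ℕ) : 0 < kap k D :=
  Finset.prod_pos fun p hp => pow_pos (Nat.prime_of_mem_primeFactors hp).pos _

lemma prod_pow_factorization_eq (D : ℕ) (hD : D ≠ 0) :
    ∏ p ∈ D.primeFactors, p ^ (D.factorization p) = D := by
  rw [← Nat.support_factorization]
  exact Nat.factorization_prod_pow_eq_self hD

lemma kap_dvd (k D : ℕ) (hk : 1 ≤ k) (hD : D ≠ 0) : kap k D ∣ D := by
  conv_rhs => rw [← prod_pow_factorization_eq D hD]
  apply Finset.prod_dvd_prod_of_dvd
  intro p hp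
  apply pow_dvd_pow
  apply ceil_div_le hk
  exact (Nat.prime_of_mem_primeFactors hp).factorization_pos_of_dvd hD
    (Nat.dvd_of_mem_primeFactors hp)

lemma dvd_kap_pow (k D : ℕ) (hk : 1 ≤ k) (hD : D ≠ 0) : D ∣ (kap k D) ^ k := by
  conv_lhs => rw [← prod_pow_factorization_eq D hD]
  rw [kap, ← Finset.prod_pow]
  apply Finset.prod_dvd_prod_of_dvd
  intro p hp
  rw [← pow_mul]
  apply pow_dvd_pow
  rw [mul_comm]
  exact le_mul_ceil_div hk

lemma prod_prime_pow_dvd {s : Finset ℕ} (hs : ∀ p ∈ s, p.Prime) (f : ℕ → ℕ) {m : ℕ}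
    (h : ∀ p ∈ s, p ^ f p ∣ m) : (∏ p ∈ s, p ^ f p) ∣ m := by
  classical
  induction s using Finset.induction_on with
  | empty => simpa using one_dvd m
  | @insert a s' ha ih =>
    rw [Finset.prod_insert ha]
    have hcop : Nat.Coprime (a ^ f a) (∏ p ∈ s', p ^ f p) := by
      apply Nat.Coprime.pow_left
      rw [Nat.coprime_prod_right_iff]
      intro p hp
      apply Nat.Coprime.pow_right
      rw [Nat.coprime_primes (hs a (Finset.mem_insert_self a s')) (hs p (Finset.mem_insert_of_mem hp))]
      rintro rfl; exact ha hp
    exact hcop.mul_dvd_of_dvd_of_dvd (h a (Finset.mem_insert_self a s'))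
      (ih (fun p hp => hs p (Finset.mem_insert_of_mem hp)) (fun p hp => h p (Finset.mem_insert_of_mem hp)))

lemma kap_dvd_of_dvd_pow {k D m : ℕ} (hk : 1 ≤ k) (hD : D ≠ 0) (hm : m ≠ 0)
    (h : D ∣ m ^ k) : kap k D ∣ m := by
  apply prod_prime_pow_dvd (fun p hp => Nat.prime_of_mem_primeFactors hp)
  intro p hp
  have hpp := Nat.prime_of_mem_primeFactors hp
  have hle : D.factorization ≤ (m ^ k).factorization :=
    (Nat.factorization_le_iff_dvd hD (pow_ne_zero k hm)).mpr h
  have h1 : D.factorization p ≤ k * m.factorization p := by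
    have := hle p
    rwa [Nat.factorization_pow, Finsupp.smul_apply, smul_eq_mul] at this
  calc p ^ ((D.factorization p + k - 1) / k) ∣ p ^ (m.factorization p) :=
        pow_dvd_pow p (ceil_div_le_of_le_mul hk h1)
  _ ∣ m := Nat.ordProj_dvd m p


/-- For odd `d`, `d ≤ φ(d)²`. -/
lemma odd_le_totient_sq : ∀ d : ℕ, ¬ 2 ∣ d → d ≤ (Nat.totient d) ^ 2 := by
  intro d
  induction d using Nat.strong_induction_on with
  | _ d ih =>
    intro hodd
    have hd0 : d ≠ 0 := by rintro rfl; exact hodd ⟨0, rfl⟩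
    rcases eq_or_lt_of_le (Nat.one_le_iff_ne_zero.mpr hd0) with h1 | h1
    · rw [← h1]; simp
    · -- d > 1
      set p := d.minFac with hp
      have hpp : p.Prime := Nat.minFac_prime (by omega)
      have hpd : p ∣ d := Nat.minFac_dvd d
      have hdne : d ≠ 0 := by omega
      set a := d.factorization p with ha
      have hapos : 0 < a := hpp.factorization_pos_of_dvd hdne hpd
      have hcop : Nat.Coprime (p ^ a) (d / p ^ a) := Nat.Coprime.pow_left a (Nat.coprime_ordCompl hpp hdne)
      have hsplit : p ^ a * (d / p ^ a) = d := Nat.ordProj_mul_ordCompl_eq_self d p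
      have hmlt : d / p ^ a < d := by
        apply Nat.div_lt_self (by omega)
        exact Nat.one_lt_pow (by omega) hpp.one_lt
      have hmodd : ¬ 2 ∣ (d / p ^ a) := by
        intro h2
        exact hodd (h2.trans (Nat.div_dvd_of_dvd (Nat.ordProj_dvd d p)))
      have hm := ih _ hmlt hmodd
      have hp3 : 3 ≤ p := by
        rcases hpp.two_le.lt_or_eq with h | h
        · omega
        · exfalso; exact hodd (h ▸ hpd)
      have htot : Nat.totient d = Nat.totient (p ^ a) * Nat.totient (d / p ^ a) := by
        rw [← Nat.totient_mul hcop, hsplit]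
      have hpa : p ^ a ≤ (Nat.totient (p ^ a)) ^ 2 := by
        rw [Nat.totient_prime_pow hpp hapos]
        have h1 : p ≤ (p - 1) ^ 2 := by
          obtain ⟨q, hq⟩ : ∃ q, p = q + 3 := ⟨p - 3, by omega⟩
          rw [hq]
          have : q + 3 - 1 = q + 2 := by omega
          rw [this]; nlinarith
        calc p ^ a = p ^ (a - 1) * p := by
              rw [← pow_succ]; congr 1; omega
        _ ≤ (p ^ (a-1)) ^ 2 * (p-1) ^ 2 := by
              apply Nat.mul_le_mul _ h1
              apply Nat.le_self_pow (by omega)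
        _ = (p ^ (a - 1) * (p - 1)) ^ 2 := by ring
      calc d = p ^ a * (d / p ^ a) := hsplit.symm
      _ ≤ (Nat.totient (p ^ a)) ^ 2 * (Nat.totient (d / p ^ a)) ^ 2 := Nat.mul_le_mul hpa hm
      _ = (Nat.totient d) ^ 2 := by rw [htot]; ring


lemma count_dvd_dvd (N d e : ℕ) (hd : 0 < d) (he : 0 < e) :
    ((Finset.Icc 1 N).filter (fun n => d ∣ n ∧ e ∣ n - 1)).card ≤ N / (d * e) + 1 := by
  classical
  have hM : 0 < d * e := Nat.mul_pos hd he
  have hcard : ((Finset.Icc 0 (N / (d * e)))).card = N / (d * e) + 1 := by simp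
  rw [← hcard]
  apply Finset.card_le_card_of_injOn (fun n => n / (d * e))
  · intro n hn
    simp only [Finset.coe_filter, Set.mem_setOf_eq, Finset.mem_filter, Finset.mem_Icc] at hn
    simp only [Finset.coe_Icc, Set.mem_Icc]
    exact ⟨Nat.zero_le _, Nat.div_le_div_right hn.1.2⟩
  · intro n₁ h₁ n₂ h₂ heq
    have key : ∀ a b : ℕ, a ∈ ((Finset.Icc 1 N).filter (fun n => d ∣ n ∧ e ∣ n - 1) : Finset ℕ) →
        b ∈ ((Finset.Icc 1 N).filter (fun n => d ∣ n ∧ e ∣ n - 1) : Finset ℕ) → a ≤ b →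
        a / (d * e) = b / (d * e) → a = b := by
      intro a b hA hB hab hq
      simp only [Finset.mem_filter, Finset.mem_Icc] at hA hB
      have hcop : Nat.Coprime d e := by
        have h1 : Nat.gcd d e ∣ a := (Nat.gcd_dvd_left d e).trans hA.2.1
        have h2 : Nat.gcd d e ∣ a - 1 := (Nat.gcd_dvd_right d e).trans hA.2.2
        have h3 : Nat.gcd d e ∣ 1 := by
          have h4 := Nat.dvd_sub h1 h2
          have ha1 : a - (a - 1) = 1 := by omega
          rwa [ha1] at h4
        exact Nat.eq_one_of_dvd_one h3
      have hdvd : d * e ∣ b - a := by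
        apply Nat.Coprime.mul_dvd_of_dvd_of_dvd hcop
        · exact Nat.dvd_sub hB.2.1 hA.2.1
        · have h5 := Nat.dvd_sub hB.2.2 hA.2.2
          have hba : b - 1 - (a - 1) = b - a := by omega
          rwa [hba] at h5
      have e1 := Nat.div_add_mod a (d * e)
      have e2 := Nat.div_add_mod b (d * e)
      have e3 : (d * e) * (a / (d * e)) = (d * e) * (b / (d * e)) := by rw [hq]
      have m1 := Nat.mod_lt a hM
      have m2 := Nat.mod_lt b hM
      have hlt : b - a < d * e := by omega
      have := Nat.eq_zero_of_dvd_of_lt hdvd hlt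
      omega
    rcases le_total n₁ n₂ with h | h
    · exact key _ _ h₁ h₂ h heq
    · exact (key _ _ h₂ h₁ h heq.symm).symm

lemma cofactor_cong (p e n m : ℕ) (hp : 1 < p) (hep : e ∣ p - 1) (hn1 : 1 ≤ n)
    (hmn : n = p * m) (hen : e ∣ n - 1) : e ∣ m - 1 := by
  have h6 : e ∣ n - m := by
    have h : n - m = m * (p - 1) := by
      rw [hmn, mul_comm m (p - 1), Nat.sub_mul, one_mul]
    rw [h]
    exact Dvd.dvd.mul_left hep m
  have hmn' : m ≤ n := by rw [hmn]; exact Nat.le_mul_of_pos_left m (by omega)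
  have h7 : m - 1 = (n - 1) - (n - m) := by omega
  rw [h7]
  exact Nat.dvd_sub hen h6

lemma count_prime_case (N p e : ℕ) (hp : 1 < p) (he : 0 < e) (hep : e ∣ p - 1) :
    ((Finset.Icc 1 N).filter (fun n => p ∣ n ∧ e ∣ n - 1 ∧ n ≠ p)).card ≤ N / (p * e) := by
  classical
  have hM : 0 < p * e := by positivity
  have hcard : ((Finset.Icc 1 (N / (p * e)))).card = N / (p * e) := by simp
  rw [← hcard]
  have recon : ∀ n : ℕ, n ∈ ((Finset.Icc 1 N).filter (fun n => p ∣ n ∧ e ∣ n - 1 ∧ n ≠ p) : Finset ℕ) →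
      (1 ≤ (n / p - 1) / e ∧ (n / p - 1) / e ≤ N / (p * e)) ∧ n = p * (e * ((n / p - 1) / e) + 1) := by
    intro n hn
    simp only [Finset.mem_filter, Finset.mem_Icc] at hn
    obtain ⟨⟨hn1, hnN⟩, ⟨m, hmn⟩, hen, hnp⟩ := hn
    have hm1 : 1 ≤ m := by
      rcases Nat.eq_zero_or_pos m with h0 | h0
      · subst h0; rw [mul_zero] at hmn; omega
      · exact h0
    have hem : e ∣ m - 1 := cofactor_cong p e n m hp hep hn1 hmn hen
    have hm2 : 2 ≤ m := by
      rcases eq_or_lt_of_le hm1 with h | h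
      · exfalso; apply hnp; rw [hmn, ← h, mul_one]
      · omega
    obtain ⟨j, hj⟩ := hem
    have hj1 : 1 ≤ j := by
      rcases Nat.eq_zero_or_pos j with h0 | h0
      · subst h0; rw [mul_zero] at hj; omega
      · exact h0
    have hdivp : n / p = m := by rw [hmn]; exact Nat.mul_div_cancel_left m (by omega)
    have hje : (n / p - 1) / e = j := by
      rw [hdivp, hj, Nat.mul_div_cancel_left j (by omega)]
    refine ⟨⟨?_, ?_⟩, ?_⟩
    · rw [hje]; exact hj1
    · rw [hje, Nat.le_div_iff_mul_le hM]
      have hn_eq : n = p * (e * j) + p := by rw [hmn]; have : m = e * j + 1 := by omega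
                                             rw [this]; ring
      calc j * (p * e) = p * (e * j) := by ring
      _ ≤ N := by omega
    · rw [hje, hmn]; congr 1; omega
  apply Finset.card_le_card_of_injOn (fun n => (n / p - 1) / e)
  · intro n hn
    simp only [Finset.coe_Icc, Set.mem_Icc]
    exact (recon n hn).1
  · intro n₁ h₁ n₂ h₂ heq
    have r1 := (recon n₁ h₁).2
    have r2 := (recon n₂ h₂).2
    rw [r1, r2]
    simp only at heq
    rw [heq]


lemma exists_mid_divisor : ∀ n : ℕ, ∀ W Z : ℕ, 1 ≤ W → 2 ≤ Z → W ≤ n →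
    (∀ p : ℕ, p.Prime → p ∣ n → p ≤ Z) → ∃ d, d ∣ n ∧ W ≤ d ∧ d < W * Z := by
  intro n
  induction n using Nat.strong_induction_on with
  | _ n ih =>
    intro W Z hW hZ hWn hfac
    rcases lt_or_ge n (W * Z) with h | h
    · exact ⟨n, dvd_rfl, hWn, h⟩
    · have hn1 : 1 < n := by nlinarith
      set p := n.minFac with hp
      have hpp : p.Prime := Nat.minFac_prime (by omega)
      have hpd : p ∣ n := Nat.minFac_dvd n
      have hpZ : p ≤ Z := hfac p hpp hpd
      have hplt : 1 < p := hpp.one_lt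
      have hlt : n / p < n := Nat.div_lt_self (by omega) hplt
      have hWnp : W ≤ n / p := by
        rw [Nat.le_div_iff_mul_le (by omega)]
        calc W * p ≤ W * Z := Nat.mul_le_mul_left W hpZ
        _ ≤ n := h
      have hfac' : ∀ q : ℕ, q.Prime → q ∣ n / p → q ≤ Z := fun q hq hqd =>
        hfac q hq (hqd.trans (Nat.div_dvd_of_dvd hpd))
      obtain ⟨d, hd1, hd2, hd3⟩ := ih (n / p) hlt W Z hW hZ hWnp hfac'
      exact ⟨d, hd1.trans (Nat.div_dvd_of_dvd hpd), hd2, hd3⟩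


lemma sum_inv_rpow_bound (K A M : ℕ) (hK : 1 ≤ K) (hA : 1 ≤ A) :
    ∑ m ∈ Finset.Icc (A + 1) M, ((m : ℝ)⁻¹ * ((m - 1 : ℕ) : ℝ) ^ (-(1 / (K : ℝ)))) ≤
      (K : ℝ) * ((A : ℝ) ^ (-(1 / (K : ℝ)))) := by
  have hK0 : (0 : ℝ) < K := by exact_mod_cast hK
  have hK1 : (1 : ℝ) ≤ K := by exact_mod_cast hK
  set s : ℝ := 1 / (K : ℝ) with hs
  have hs0 : 0 < s := by positivity
  have hKs : (K : ℝ) * s = 1 := by rw [hs]; field_simp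
  set f : ℕ → ℝ := fun j => ((j : ℝ)) ^ (-s) with hf
  have hfnn : ∀ j, 0 ≤ f j := fun j => Real.rpow_nonneg (Nat.cast_nonneg j) _
  have hterm : ∀ m ∈ Finset.Icc (A + 1) M,
      (m : ℝ)⁻¹ * ((m - 1 : ℕ) : ℝ) ^ (-s) ≤ (K : ℝ) * (f (m - 1) - f m) := by
    intro m hm
    rw [Finset.mem_Icc] at hm
    have hm2 : 2 ≤ m := by omega
    have hm0 : (0 : ℝ) < m := by exact_mod_cast (by omega : 0 < m)
    have hm2' : (2 : ℝ) ≤ m := by exact_mod_cast hm2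
    have hm10 : (0 : ℝ) < ((m - 1 : ℕ) : ℝ) := by exact_mod_cast (by omega : 0 < m - 1)
    have hcast : ((m - 1 : ℕ) : ℝ) = (m : ℝ) - 1 := by
      have h1 : (1:ℕ) ≤ m := by omega
      push_cast [h1]; ring
    set c : ℝ := ((m - 1 : ℕ) : ℝ) / m with hc
    have hc0 : 0 < c := by positivity
    have hKsm : (K : ℝ) * (s / m) = 1 / m := by rw [← mul_div_assoc, hKs]
    have hsm1 : s / m < 1 := by
      have h1 : (1:ℝ) < (K:ℝ) * m := by nlinarith
      have h2 : s / m = 1 / ((K:ℝ) * m) := by rw [hs]; field_simp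
      rw [h2, div_lt_one (by linarith)]; linarith
    have hsm0 : 0 < s / m := by positivity
    have hbern : c ≤ (1 - s / m) ^ K := by
      have h := one_add_mul_le_pow (show (-2:ℝ) ≤ -(s/m) by nlinarith) K
      have heq1 : 1 + (K:ℝ) * (-(s/m)) = 1 - 1/m := by rw [mul_neg, hKsm]; ring
      have heq2 : (1:ℝ) + -(s/m) = 1 - s/m := by ring
      rw [heq1, heq2] at h
      calc c = 1 - 1/m := by rw [hc, hcast]; field_simp
      _ ≤ (1 - s/m) ^ K := h
    have hkey : c ^ s ≤ 1 - s / m := by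
      have h1 : c ^ s ≤ ((1 - s/m) ^ K) ^ s :=
        Real.rpow_le_rpow hc0.le hbern hs0.le
      have h2 : (((1 - s/m) ^ K : ℝ)) ^ s = (1 - s/m) ^ ((K:ℝ) * s) := by
        rw [← Real.rpow_natCast (1 - s/m) K, ← Real.rpow_mul (by linarith)]
      rw [h2, hKs, Real.rpow_one] at h1
      exact h1
    have hpos : 0 < ((m - 1 : ℕ) : ℝ) ^ (-s) := Real.rpow_pos_of_pos hm10 _
    have hsplit : f m = ((m - 1 : ℕ) : ℝ) ^ (-s) * c ^ s := by
      show (m:ℝ) ^ (-s) = _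
      rw [hc, Real.div_rpow hm10.le hm0.le, Real.rpow_neg hm10.le, Real.rpow_neg hm0.le]
      have hne1 : ((m - 1 : ℕ) : ℝ) ^ s ≠ 0 := by positivity
      have hne2 : ((m : ℕ) : ℝ) ^ s ≠ 0 := by positivity
      field_simp
    have hfm1 : f (m - 1) = ((m - 1 : ℕ) : ℝ) ^ (-s) := rfl
    rw [hfm1, hsplit]
    set X : ℝ := ((m - 1 : ℕ) : ℝ) ^ (-s)
    have hmul : (K:ℝ) * X * (c ^ s) ≤ (K:ℝ) * X * (1 - s/m) :=
      mul_le_mul_of_nonneg_left hkey (by positivity)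
    have hXm : (m:ℝ)⁻¹ * X = (K:ℝ) * X * (s/m) := by
      rw [mul_comm ((K:ℝ)) X, mul_assoc, hKsm]
      rw [one_div, mul_comm]
    nlinarith [hmul]
  calc ∑ m ∈ Finset.Icc (A + 1) M, ((m : ℝ)⁻¹ * ((m - 1 : ℕ) : ℝ) ^ (-s))
      ≤ ∑ m ∈ Finset.Icc (A + 1) M, (K : ℝ) * (f (m - 1) - f m) :=
        Finset.sum_le_sum hterm
  _ = (K : ℝ) * ∑ m ∈ Finset.Icc (A + 1) M, (f (m - 1) - f m) := by
        rw [Finset.mul_sum]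
  _ = (K : ℝ) * (f A - f (A + (M - A))) := by
        congr 1
        rw [← Finset.Ico_add_one_right_eq_Icc, Finset.sum_Ico_eq_sum_range]
        have hlen : M + 1 - (A + 1) = M - A := by omega
        rw [hlen]
        have hswap : ∀ i, f (A + 1 + i - 1) - f (A + 1 + i) = f (A + i) - f (A + (i+1)) := by
          intro i
          congr 2 <;> omega
        calc ∑ i ∈ Finset.range (M - A), (f (A + 1 + i - 1) - f (A + 1 + i))
            = ∑ i ∈ Finset.range (M - A), ((fun j => f (A + j)) i - (fun j => f (A + j)) (i+1)) := by
              apply Finset.sum_congr rfl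
              intro i _
              exact hswap i
        _ = f (A + 0) - f (A + (M - A)) := Finset.sum_range_sub' (fun j => f (A + j)) (M - A)
        _ = f A - f (A + (M - A)) := by rw [Nat.add_zero]
  _ ≤ (K : ℝ) * f A := by
        have := hfnn (A + (M - A))
        nlinarith [hK0]
  _ = (K : ℝ) * ((A : ℝ) ^ (-s)) := rfl

lemma rpow_nat_inv_le_of_le_pow {c y : ℝ} {k : ℕ} (hk : 1 ≤ k) (hc : 0 ≤ c) (hy : 0 ≤ y)
    (h : c ≤ y ^ k) : c ^ (1/(k:ℝ)) ≤ y := by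
  have hk0 : (0:ℝ) < k := by exact_mod_cast hk
  have h1 : c ^ (1/(k:ℝ)) ≤ (y ^ k) ^ (1/(k:ℝ)) :=
    Real.rpow_le_rpow hc h (by positivity)
  calc c ^ (1/(k:ℝ)) ≤ (y ^ k) ^ (1/(k:ℝ)) := h1
  _ = y ^ ((k:ℝ) * (1/(k:ℝ))) := by
      rw [← Real.rpow_natCast y k, ← Real.rpow_mul hy]
  _ = y := by
      rw [mul_one_div, div_self (by positivity : (k:ℝ) ≠ 0), Real.rpow_one]

lemma rpow_neg_anti {c y : ℝ} (hc : 0 < c) (hcy : c ≤ y) {s : ℝ} (hs : 0 ≤ s) :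
    y ^ (-s) ≤ c ^ (-s) := by
  rw [Real.rpow_neg (by linarith), Real.rpow_neg hc.le]
  apply inv_anti₀ (Real.rpow_pos_of_pos hc s)
  exact Real.rpow_le_rpow hc.le hcy hs

theorem k_Lehmer_upper_bound :
    ∀ k : ℕ, 2 ≤ k → ∃ C : ℝ, ∀ x : ℝ, 1 ≤ x →
      ((((Finset.Icc 1 ⌊x⌋₊).filter
        (fun n => 1 < n ∧ ¬ n.Prime ∧ n.totient ∣ (n - 1) ^ k)).card : ℝ))
        ≤ C * x ^ ((1 : ℝ) - 1 / (4 * (k : ℝ) - 1)) := by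
  classical
  intro k hk
  refine ⟨3 * (k : ℝ) + 25, ?_⟩
  intro x hx
  have hk1 : 1 ≤ k := by omega
  have hx0 : (0 : ℝ) < x := by linarith
  have hk2 : (2 : ℝ) ≤ (k : ℝ) := by exact_mod_cast hk
  set r : ℝ := 1 / (4 * (k : ℝ) - 1) with hr
  have h4k : (7 : ℝ) ≤ 4 * (k : ℝ) - 1 := by linarith
  have hr0 : 0 < r := by rw [hr]; positivity
  have hr1 : r ≤ 1 / 7 := by
    rw [hr]
    apply div_le_div_of_nonneg_left one_pos.le (by norm_num) h4k
  set a : ℝ := (k : ℝ) * r with ha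
  set b : ℝ := 2 * (k : ℝ) * r with hb
  have ha0 : 0 ≤ a := by positivity
  have hb0 : 0 ≤ b := by positivity
  have hrr : r * (4 * (k:ℝ) - 1) = 1 := by rw [hr]; field_simp
  have hab : a + b ≤ 1 - r := by
    rw [ha, hb]
    nlinarith [mul_nonneg (by linarith : (0:ℝ) ≤ (k:ℝ) - 2) hr0.le, hrr]
  -- thresholds
  set N : ℕ := ⌊x⌋₊ with hN
  set Z : ℕ := ⌈x ^ a⌉₊ + 1 with hZdef
  set W : ℕ := ⌈x ^ b⌉₊ + 1 with hWdef
  have hxa1 : (1:ℝ) ≤ x ^ a := by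
    calc (1:ℝ) = 1 ^ a := (Real.one_rpow a).symm
    _ ≤ x ^ a := Real.rpow_le_rpow (by norm_num) hx ha0
  have hxb1 : (1:ℝ) ≤ x ^ b := by
    calc (1:ℝ) = 1 ^ b := (Real.one_rpow b).symm
    _ ≤ x ^ b := Real.rpow_le_rpow (by norm_num) hx hb0
  have hZ2 : 2 ≤ Z := by
    rw [hZdef]
    have : 1 ≤ ⌈x ^ a⌉₊ := Nat.one_le_ceil_iff.mpr (by linarith)
    omega
  have hW2 : 2 ≤ W := by
    rw [hWdef]
    have : 1 ≤ ⌈x ^ b⌉₊ := Nat.one_le_ceil_iff.mpr (by linarith)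
    omega
  have hZlb : x ^ a ≤ (Z:ℝ) := by
    rw [hZdef]
    push_cast
    have := Nat.le_ceil (x ^ a)
    linarith
  have hWlb : x ^ b ≤ ((W - 1 : ℕ):ℝ) := by
    have : (W - 1 : ℕ) = ⌈x ^ b⌉₊ := by rw [hWdef]; omega
    rw [this]
    exact Nat.le_ceil _
  have hZub : (Z:ℝ) ≤ 3 * x ^ a := by
    rw [hZdef]
    push_cast
    have h1 := Nat.ceil_lt_add_one (by positivity : (0:ℝ) ≤ x ^ a)
    linarith
  have hWub : (W:ℝ) ≤ 3 * x ^ b := by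
    rw [hWdef]
    push_cast
    have h1 := Nat.ceil_lt_add_one (by positivity : (0:ℝ) ≤ x ^ b)
    linarith
  have hWZub : ((W * Z : ℕ) : ℝ) ≤ 9 * x ^ (1 - r) := by
    have hcast : ((W * Z : ℕ) : ℝ) = (W:ℝ) * (Z:ℝ) := by push_cast; ring
    rw [hcast]
    calc (W:ℝ) * (Z:ℝ) ≤ (3 * x ^ b) * (3 * x ^ a) := by
          apply mul_le_mul hWub hZub (by positivity) (by positivity)
    _ = 9 * (x ^ b * x ^ a) := by ring
    _ = 9 * x ^ (b + a) := by rw [← Real.rpow_add hx0]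
    _ ≤ 9 * x ^ (1 - r) := by
          have h9 := Real.rpow_le_rpow_of_exponent_le hx (by linarith : b + a ≤ 1 - r)
          linarith
  have hNx : (N : ℝ) ≤ x := Nat.floor_le hx0.le
  -- the set
  set P : ℕ → Prop := fun n => 1 < n ∧ ¬ n.Prime ∧ n.totient ∣ (n - 1) ^ k with hP
  set S : Finset ℕ := (Finset.Icc 1 N).filter (fun n => 1 < n ∧ ¬ n.Prime ∧ n.totient ∣ (n - 1) ^ k) with hS
  -- basic facts about members
  have hSodd : ∀ n, 1 < n → ¬ n.Prime → n.totient ∣ (n - 1) ^ k → ¬ 2 ∣ n := by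
    intro n h1 h2 h3
    have hn2 : 2 < n := by
      rcases Nat.lt_or_ge n 3 with h | h
      · interval_cases n
        · exact absurd Nat.prime_two h2
      · omega
    have heven : 2 ∣ n.totient := (Nat.totient_even hn2).two_dvd
    have h4 : 2 ∣ (n - 1) ^ k := heven.trans h3
    have h5 : 2 ∣ n - 1 := Nat.Prime.dvd_of_dvd_pow Nat.prime_two h4
    intro h6
    omega
  -- covering sets
  set T1 : Finset ℕ := S.filter (fun n => n ≤ W * Z) with hT1
  set T2 : Finset ℕ := S.filter (fun n => ∃ p, p.Prime ∧ p ∣ n ∧ Z < p) with hT2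
  set T3 : Finset ℕ := S.filter (fun n => W * Z < n ∧ ∀ p, p.Prime → p ∣ n → p ≤ Z) with hT3
  have hcover : S ⊆ T1 ∪ (T2 ∪ T3) := by
    intro n hn
    by_cases h1 : n ≤ W * Z
    · exact Finset.mem_union_left _ (Finset.mem_filter.mpr ⟨hn, h1⟩)
    · apply Finset.mem_union_right
      by_cases h2 : ∃ p, p.Prime ∧ p ∣ n ∧ Z < p
      · exact Finset.mem_union_left _ (Finset.mem_filter.mpr ⟨hn, h2⟩)
      · push_neg at h2
        apply Finset.mem_union_right
        exact Finset.mem_filter.mpr ⟨hn, by omega, fun p hp hpn => h2 p hp hpn⟩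
  have hcard : (S.card : ℝ) ≤ (T1.card : ℝ) + ((T2.card : ℝ) + (T3.card : ℝ)) := by
    have h1 := Finset.card_le_card hcover
    have h2 := Finset.card_union_le T1 (T2 ∪ T3)
    have h3 := Finset.card_union_le T2 T3
    have h4 : S.card ≤ T1.card + (T2.card + T3.card) :=
      h1.trans (h2.trans (Nat.add_le_add_left h3 _))
    exact_mod_cast h4
  -- T1 bound
  have hT1bound : (T1.card : ℝ) ≤ 9 * x ^ (1 - r) := by
    have h1 : T1 ⊆ Finset.Icc 1 (W * Z) := by
      intro n hn
      rw [hT1, Finset.mem_filter] at hn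
      obtain ⟨hnS, hnWZ⟩ := hn
      rw [hS, Finset.mem_filter, Finset.mem_Icc] at hnS
      exact Finset.mem_Icc.mpr ⟨hnS.1.1, hnWZ⟩
    calc (T1.card : ℝ) ≤ ((Finset.Icc 1 (W * Z)).card : ℝ) := by
          exact_mod_cast Finset.card_le_card h1
    _ = ((W * Z : ℕ) : ℝ) := by
          have : (Finset.Icc 1 (W * Z)).card = W * Z := by rw [Nat.card_Icc]; omega
          rw [this]
    _ ≤ 9 * x ^ (1 - r) := hWZub
  -- T2 bound
  have hT2bound : (T2.card : ℝ) ≤ (k:ℝ) * x ^ (1 - r) := by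
    set PP : Finset ℕ := (Finset.Icc (Z+1) N).filter Nat.Prime with hPP
    set B : ℕ → Finset ℕ := fun p =>
      (Finset.Icc 1 N).filter (fun n => p ∣ n ∧ kap k (p-1) ∣ n - 1 ∧ n ≠ p) with hB
    have hsub : T2 ⊆ PP.biUnion B := by
      intro n hn
      rw [hT2, Finset.mem_filter] at hn
      obtain ⟨hnS, p, hp, hpn, hZp⟩ := hn
      have hnS' := hnS
      rw [hS, Finset.mem_filter, Finset.mem_Icc] at hnS'
      obtain ⟨⟨hn1, hnN⟩, h1n, hnpr, hdvd⟩ := hnS'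
      have hpN : p ≤ N := le_trans (Nat.le_of_dvd (by omega) hpn) hnN
      have hkapdvd : kap k (p-1) ∣ n - 1 := by
        apply kap_dvd_of_dvd_pow hk1 (by have := hp.two_le; omega) (by omega)
        calc (p - 1 : ℕ) = p.totient := (Nat.totient_prime hp).symm
        _ ∣ n.totient := Nat.totient_dvd_of_dvd hpn
        _ ∣ (n-1)^k := hdvd
      apply Finset.mem_biUnion.mpr
      refine ⟨p, ?_, ?_⟩
      · rw [hPP, Finset.mem_filter, Finset.mem_Icc]
        exact ⟨⟨by omega, hpN⟩, hp⟩
      · rw [hB, Finset.mem_filter, Finset.mem_Icc]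
        exact ⟨⟨by omega, hnN⟩, hpn, hkapdvd, fun h => hnpr (h ▸ hp)⟩
    have hc1 : T2.card ≤ ∑ p ∈ PP, (B p).card :=
      le_trans (Finset.card_le_card hsub) (Finset.card_biUnion_le)
    have hc2 : ∀ p ∈ PP, ((B p).card : ℝ) ≤
        x * ((p:ℝ)⁻¹ * ((p - 1 : ℕ) : ℝ) ^ (-(1/(k:ℝ)))) := by
      intro p hpPP
      rw [hPP, Finset.mem_filter, Finset.mem_Icc] at hpPP
      obtain ⟨⟨hpZ, hpN⟩, hp⟩ := hpPP
      have hp2 : 2 ≤ p := hp.two_le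
      have hp1ne : (p - 1 : ℕ) ≠ 0 := by omega
      set e : ℕ := kap k (p - 1) with he
      have he0 : 0 < e := kap_pos k (p-1)
      have hcount : (B p).card ≤ N / (p * e) :=
        count_prime_case N p e hp.one_lt he0 (kap_dvd k (p-1) hk1 hp1ne)
      have hcast : ((N / (p * e) : ℕ) : ℝ) ≤ (N:ℝ) / ((p : ℝ) * (e : ℝ)) := by
        have := Nat.cast_div_le (α := ℝ) (m := N) (n := p * e)
        rwa [Nat.cast_mul] at this
      have helb : ((p - 1 : ℕ) : ℝ) ^ ((1:ℝ)/(k:ℝ)) ≤ (e : ℝ) := by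
        apply rpow_nat_inv_le_of_le_pow hk1 (Nat.cast_nonneg _) (Nat.cast_nonneg _)
        have h3 : (p - 1 : ℕ) ≤ e ^ k := Nat.le_of_dvd (by positivity) (dvd_kap_pow k (p-1) hk1 hp1ne)
        exact_mod_cast h3
      have hp0 : (0:ℝ) < p := by exact_mod_cast (by omega : 0 < p)
      have hp10 : (0:ℝ) < ((p - 1 : ℕ):ℝ) := by exact_mod_cast (by omega : 0 < p - 1)
      have hrp0 : (0:ℝ) < ((p - 1 : ℕ):ℝ) ^ ((1:ℝ)/(k:ℝ)) := Real.rpow_pos_of_pos hp10 _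
      calc ((B p).card : ℝ) ≤ ((N / (p * e) : ℕ) : ℝ) := by exact_mod_cast hcount
      _ ≤ (N:ℝ) / ((p : ℝ) * (e : ℝ)) := hcast
      _ ≤ x / ((p : ℝ) * (e : ℝ)) := by gcongr
      _ ≤ x / ((p : ℝ) * ((p - 1 : ℕ) : ℝ) ^ ((1:ℝ)/(k:ℝ))) := by
          apply div_le_div_of_nonneg_left hx0.le (by positivity)
          exact mul_le_mul_of_nonneg_left helb hp0.le
      _ = x * ((p:ℝ)⁻¹ * ((p - 1 : ℕ) : ℝ) ^ (-(1/(k:ℝ)))) := by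
          rw [Real.rpow_neg hp10.le, div_eq_mul_inv, mul_inv]
    have hsumP : ∑ p ∈ PP, (x * ((p:ℝ)⁻¹ * ((p - 1 : ℕ) : ℝ) ^ (-(1/(k:ℝ))))) ≤
        x * ((k:ℝ) * ((Z:ℝ) ^ (-(1/(k:ℝ))))) := by
      rw [← Finset.mul_sum]
      apply mul_le_mul_of_nonneg_left ?_ hx0.le
      calc ∑ p ∈ PP, ((p:ℝ)⁻¹ * ((p - 1 : ℕ) : ℝ) ^ (-(1/(k:ℝ))))
          ≤ ∑ m ∈ Finset.Icc (Z+1) N, ((m:ℝ)⁻¹ * ((m - 1 : ℕ) : ℝ) ^ (-(1/(k:ℝ)))) := by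
            apply Finset.sum_le_sum_of_subset_of_nonneg
            · rw [hPP]; exact Finset.filter_subset _ _
            · intro m hm _
              rw [Finset.mem_Icc] at hm
              have : (0:ℝ) < m := by exact_mod_cast (by omega : 0 < m)
              positivity
      _ ≤ (k:ℝ) * ((Z:ℝ) ^ (-(1/(k:ℝ)))) := sum_inv_rpow_bound k Z N hk1 (by omega)
    have hZr : ((Z:ℝ)) ^ (-(1/(k:ℝ))) ≤ x ^ (-r) := by
      have h1 : (0:ℝ) < x ^ a := by positivity
      calc ((Z:ℝ)) ^ (-(1/(k:ℝ))) ≤ (x ^ a) ^ (-(1/(k:ℝ))) :=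
            rpow_neg_anti h1 hZlb (by positivity)
      _ = x ^ (a * (-(1/(k:ℝ)))) := by rw [← Real.rpow_mul hx0.le]
      _ = x ^ (-r) := by
            congr 1
            rw [ha]
            field_simp
    calc (T2.card : ℝ) ≤ ∑ p ∈ PP, ((B p).card : ℝ) := by exact_mod_cast hc1
    _ ≤ ∑ p ∈ PP, (x * ((p:ℝ)⁻¹ * ((p - 1 : ℕ) : ℝ) ^ (-(1/(k:ℝ))))) :=
        Finset.sum_le_sum hc2
    _ ≤ x * ((k:ℝ) * ((Z:ℝ) ^ (-(1/(k:ℝ))))) := hsumP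
    _ ≤ x * ((k:ℝ) * (x ^ (-r))) := by
        apply mul_le_mul_of_nonneg_left ?_ hx0.le
        exact mul_le_mul_of_nonneg_left hZr (by positivity)
    _ = (k:ℝ) * x ^ (1 - r) := by
        rw [Real.rpow_sub hx0, Real.rpow_one, Real.rpow_neg hx0.le]
        ring
  -- T3 bound
  have hT3bound : (T3.card : ℝ) ≤ 2*(k:ℝ) * x ^ (1 - r) + 9 * x ^ (1 - r) := by
    set DD : Finset ℕ := (Finset.Icc W (W*Z)).filter (fun d => ¬ 2 ∣ d) with hDD
    set A : ℕ → Finset ℕ := fun d =>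
      (Finset.Icc 1 N).filter (fun n => d ∣ n ∧ kap k (Nat.totient d) ∣ n - 1) with hA
    have hsub : T3 ⊆ DD.biUnion A := by
      intro n hn
      rw [hT3, Finset.mem_filter] at hn
      obtain ⟨hnS, hWZn, hsmooth⟩ := hn
      have hnS' := hnS
      rw [hS, Finset.mem_filter, Finset.mem_Icc] at hnS'
      obtain ⟨⟨hn1, hnN⟩, h1n, hnpr, hdvd⟩ := hnS'
      have hnodd : ¬ 2 ∣ n := hSodd n h1n hnpr hdvd
      have hWWZ : W ≤ W * Z := Nat.le_mul_of_pos_right W (by omega)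
      obtain ⟨d, hdn, hWd, hdWZ⟩ :=
        exists_mid_divisor n W Z (by omega) hZ2 (by omega) hsmooth
      have hd0 : 0 < d := by omega
      have hkapdvd : kap k (Nat.totient d) ∣ n - 1 := by
        apply kap_dvd_of_dvd_pow hk1 (Nat.totient_pos.mpr hd0).ne' (by omega)
        exact dvd_trans (Nat.totient_dvd_of_dvd hdn) hdvd
      apply Finset.mem_biUnion.mpr
      refine ⟨d, ?_, ?_⟩
      · rw [hDD, Finset.mem_filter, Finset.mem_Icc]
        exact ⟨⟨hWd, by omega⟩, fun h2d => hnodd (h2d.trans hdn)⟩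
      · rw [hA, Finset.mem_filter, Finset.mem_Icc]
        exact ⟨⟨by omega, hnN⟩, hdn, hkapdvd⟩
    have hc1 : T3.card ≤ ∑ d ∈ DD, (A d).card :=
      le_trans (Finset.card_le_card hsub) (Finset.card_biUnion_le)
    have hc2 : ∀ d ∈ DD, ((A d).card : ℝ) ≤
        x * ((d:ℝ)⁻¹ * ((d - 1 : ℕ) : ℝ) ^ (-(1/((2*k : ℕ):ℝ)))) + 1 := by
      intro d hdDD
      rw [hDD, Finset.mem_filter, Finset.mem_Icc] at hdDD
      obtain ⟨⟨hWd, hdWZ⟩, hdodd⟩ := hdDD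
      have hd2 : 2 ≤ d := by omega
      have hd0 : 0 < d := by omega
      set e : ℕ := kap k (Nat.totient d) with he
      have he0 : 0 < e := kap_pos _ _
      have htot0 : Nat.totient d ≠ 0 := (Nat.totient_pos.mpr hd0).ne'
      have hcount : (A d).card ≤ N / (d * e) + 1 := count_dvd_dvd N d e hd0 he0
      have hd2k : (d : ℕ) ≤ e ^ (2 * k) := by
        have h1 : Nat.totient d ≤ e ^ k :=
          Nat.le_of_dvd (by positivity) (dvd_kap_pow k _ hk1 htot0)
        have h2 : d ≤ (Nat.totient d) ^ 2 := odd_le_totient_sq d hdodd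
        calc d ≤ (Nat.totient d) ^ 2 := h2
        _ ≤ (e ^ k) ^ 2 := Nat.pow_le_pow_left h1 2
        _ = e ^ (2 * k) := by ring
      have helb : ((d : ℕ) : ℝ) ^ ((1:ℝ)/((2*k : ℕ):ℝ)) ≤ (e : ℝ) := by
        apply rpow_nat_inv_le_of_le_pow (by omega) (Nat.cast_nonneg _) (Nat.cast_nonneg _)
        exact_mod_cast hd2k
      have hd0' : (0:ℝ) < d := by exact_mod_cast hd0
      have hd10 : (0:ℝ) < ((d - 1 : ℕ):ℝ) := by exact_mod_cast (by omega : 0 < d - 1)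
      have hd1d : ((d - 1 : ℕ):ℝ) ≤ (d:ℝ) := by exact_mod_cast (by omega : d - 1 ≤ d)
      have hcast : ((N / (d * e) : ℕ) : ℝ) ≤ (N:ℝ) / ((d : ℝ) * (e : ℝ)) := by
        have := Nat.cast_div_le (α := ℝ) (m := N) (n := d * e)
        rwa [Nat.cast_mul] at this
      have hmain : ((N / (d * e) : ℕ) : ℝ) ≤
          x * ((d:ℝ)⁻¹ * ((d - 1 : ℕ) : ℝ) ^ (-(1/((2*k : ℕ):ℝ)))) := by
        have hrp0 : (0:ℝ) < ((d:ℕ):ℝ) ^ ((1:ℝ)/((2*k : ℕ):ℝ)) := Real.rpow_pos_of_pos hd0' _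
        calc ((N / (d * e) : ℕ) : ℝ) ≤ (N:ℝ) / ((d : ℝ) * (e : ℝ)) := hcast
        _ ≤ x / ((d : ℝ) * (e : ℝ)) := by gcongr
        _ ≤ x / ((d : ℝ) * ((d:ℝ) ^ ((1:ℝ)/((2*k : ℕ):ℝ)))) := by
            apply div_le_div_of_nonneg_left hx0.le (by positivity)
            exact mul_le_mul_of_nonneg_left helb hd0'.le
        _ = x * ((d:ℝ)⁻¹ * ((d:ℝ)) ^ (-(1/((2*k : ℕ):ℝ)))) := by
            rw [Real.rpow_neg hd0'.le, div_eq_mul_inv, mul_inv]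
        _ ≤ x * ((d:ℝ)⁻¹ * ((d - 1 : ℕ) : ℝ) ^ (-(1/((2*k : ℕ):ℝ)))) := by
            apply mul_le_mul_of_nonneg_left ?_ hx0.le
            apply mul_le_mul_of_nonneg_left ?_ (by positivity)
            exact rpow_neg_anti hd10 hd1d (by positivity)
      calc ((A d).card : ℝ) ≤ ((N / (d * e) + 1 : ℕ) : ℝ) := by exact_mod_cast hcount
      _ = ((N / (d * e) : ℕ) : ℝ) + 1 := by push_cast; ring
      _ ≤ x * ((d:ℝ)⁻¹ * ((d - 1 : ℕ) : ℝ) ^ (-(1/((2*k : ℕ):ℝ)))) + 1 := by linarith [hmain]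
    have hIccW : Finset.Icc W (W*Z) = Finset.Icc ((W-1)+1) (W*Z) := by
      rw [Nat.sub_add_cancel (by omega : 1 ≤ W)]
    have hsumD : ∑ d ∈ DD, (x * ((d:ℝ)⁻¹ * ((d - 1 : ℕ) : ℝ) ^ (-(1/((2*k : ℕ):ℝ))))) ≤
        x * (((2*k : ℕ):ℝ) * (((W-1 : ℕ):ℝ) ^ (-(1/((2*k : ℕ):ℝ))))) := by
      rw [← Finset.mul_sum]
      apply mul_le_mul_of_nonneg_left ?_ hx0.le
      calc ∑ d ∈ DD, ((d:ℝ)⁻¹ * ((d - 1 : ℕ) : ℝ) ^ (-(1/((2*k : ℕ):ℝ))))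
          ≤ ∑ d ∈ Finset.Icc ((W-1)+1) (W*Z), ((d:ℝ)⁻¹ * ((d - 1 : ℕ) : ℝ) ^ (-(1/((2*k : ℕ):ℝ)))) := by
            apply Finset.sum_le_sum_of_subset_of_nonneg
            · rw [hDD, ← hIccW]; exact Finset.filter_subset _ _
            · intro m hm _
              rw [Finset.mem_Icc] at hm
              have : (0:ℝ) < m := by exact_mod_cast (by omega : 0 < m)
              positivity
      _ ≤ ((2*k : ℕ):ℝ) * (((W-1 : ℕ):ℝ) ^ (-(1/((2*k : ℕ):ℝ)))) :=
            sum_inv_rpow_bound (2*k) (W-1) (W*Z) (by omega) (by omega)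
    have hWr : ((W-1 : ℕ):ℝ) ^ (-(1/((2*k : ℕ):ℝ))) ≤ x ^ (-r) := by
      have h1 : (0:ℝ) < x ^ b := by positivity
      calc ((W-1 : ℕ):ℝ) ^ (-(1/((2*k : ℕ):ℝ))) ≤ (x ^ b) ^ (-(1/((2*k : ℕ):ℝ))) :=
            rpow_neg_anti h1 hWlb (by positivity)
      _ = x ^ (b * (-(1/((2*k : ℕ):ℝ)))) := by rw [← Real.rpow_mul hx0.le]
      _ = x ^ (-r) := by
            congr 1
            rw [hb]
            push_cast
            field_simp
    have hcardDD : ((DD.card : ℕ) : ℝ) ≤ 9 * x ^ (1 - r) := by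
      have h1 : DD.card ≤ (Finset.Icc W (W*Z)).card := Finset.card_le_card (by rw [hDD]; exact Finset.filter_subset _ _)
      have h2 : (Finset.Icc W (W*Z)).card = W*Z + 1 - W := Nat.card_Icc _ _
      have h3 : DD.card ≤ W * Z := by omega
      calc ((DD.card : ℕ) : ℝ) ≤ ((W * Z : ℕ):ℝ) := by exact_mod_cast h3
      _ ≤ 9 * x ^ (1 - r) := hWZub
    calc (T3.card : ℝ) ≤ ∑ d ∈ DD, ((A d).card : ℝ) := by exact_mod_cast hc1
    _ ≤ ∑ d ∈ DD, (x * ((d:ℝ)⁻¹ * ((d - 1 : ℕ) : ℝ) ^ (-(1/((2*k : ℕ):ℝ)))) + 1) :=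
        Finset.sum_le_sum hc2
    _ = ∑ d ∈ DD, (x * ((d:ℝ)⁻¹ * ((d - 1 : ℕ) : ℝ) ^ (-(1/((2*k : ℕ):ℝ))))) + DD.card := by
        rw [Finset.sum_add_distrib, Finset.sum_const, nsmul_eq_mul, mul_one]
    _ ≤ x * (((2*k : ℕ):ℝ) * (((W-1 : ℕ):ℝ) ^ (-(1/((2*k : ℕ):ℝ))))) + 9 * x ^ (1 - r) := by
        have := hcardDD
        linarith [hsumD]
    _ ≤ 2*(k:ℝ) * x ^ (1 - r) + 9 * x ^ (1 - r) := by
        have h1 : x * (((2*k : ℕ):ℝ) * (((W-1 : ℕ):ℝ) ^ (-(1/((2*k : ℕ):ℝ))))) ≤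
            x * (((2*k : ℕ):ℝ) * (x ^ (-r))) := by
          apply mul_le_mul_of_nonneg_left ?_ hx0.le
          exact mul_le_mul_of_nonneg_left hWr (by positivity)
        have h2 : x * (((2*k : ℕ):ℝ) * (x ^ (-r))) = 2*(k:ℝ) * x ^ (1 - r) := by
          rw [Real.rpow_sub hx0, Real.rpow_one, Real.rpow_neg hx0.le]
          push_cast
          ring
        linarith
  -- conclusion
  have hfin : (S.card : ℝ) ≤ (3*(k:ℝ) + 25) * x ^ (1 - r) := by
    have hxpos : (0:ℝ) < x ^ (1 - r) := by positivity
    calc (S.card : ℝ) ≤ (T1.card : ℝ) + ((T2.card : ℝ) + (T3.card : ℝ)) := hcard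
    _ ≤ 9 * x ^ (1 - r) + ((k:ℝ) * x ^ (1 - r) + (2*(k:ℝ) * x ^ (1 - r) + 9 * x ^ (1 - r))) := by
        linarith [hT1bound, hT2bound, hT3bound]
    _ ≤ (3*(k:ℝ) + 25) * x ^ (1 - r) := by nlinarith [hxpos]
  exact hfin
end

section
/- K(x) = o(π(x)) as x → ∞: for every ε > 0 there exists x₀ such that for all x ≥ x₀, the number K(x) of composite integers n ≤ x with rad(φ(n)) ∣ n − 1 satisfies K(x) ≤ ε · π(x), where π(x) is the number of primes up to x. -/
open Finset

/-- The radical of a natural number: the product of its distinct prime divisors. -/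
def rad (n : ℕ) : ℕ := ∏ p ∈ n.primeFactors, p


lemma rad_dvd (n : ℕ) : rad n ∣ n := Nat.prod_primeFactors_dvd n

lemma rad_pos (n : ℕ) : 0 < rad n :=
  Finset.prod_pos fun p hp => (Nat.prime_of_mem_primeFactors hp).pos

lemma prime_dvd_rad {p n : ℕ} (hp : p.Prime) (h : p ∣ n) (hn : n ≠ 0) : p ∣ rad n :=
  Finset.dvd_prod_of_mem _ (Nat.mem_primeFactors.2 ⟨hp, h, hn⟩)

lemma rad_dvd_rad {a b : ℕ} (h : a ∣ b) (hb : b ≠ 0) : rad a ∣ rad b :=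
  Finset.prod_dvd_prod_of_subset _ _ _ (Nat.primeFactors_mono h hb)

/-- Structure lemma. -/

lemma structure_lemma {n : ℕ} (h1 : 1 < n) (h2 : ¬ n.Prime)
    (h3 : rad n.totient ∣ n - 1) :
    2 ∣ n - 1 ∧ Squarefree n ∧
    (∀ p : ℕ, p.Prime → p ∣ n → rad (p - 1) ∣ n - 1 ∧ rad (p - 1) ∣ n / p - 1) := by
  have hn0 : n ≠ 0 := by omega
  have htp : 0 < n.totient := Nat.totient_pos.2 (by omega)
  have hn2 : 2 < n := by
    rcases Nat.lt_or_ge n 4 with h | h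
    · interval_cases n
      · exact absurd Nat.prime_two h2
      · exact absurd Nat.prime_three h2
    · omega
  have hodd : 2 ∣ n - 1 := by
    have he : 2 ∣ n.totient := (Nat.totient_even hn2).two_dvd
    exact dvd_trans (prime_dvd_rad Nat.prime_two he htp.ne') h3
  have hsqf : Squarefree n := by
    rw [Nat.squarefree_iff_prime_squarefree]
    rintro p hp hpp
    have h4 : p ∣ n.totient := by
      have : (p ^ 2).totient ∣ n.totient :=
        Nat.totient_dvd_of_dvd (by rwa [pow_two])
      rw [Nat.totient_prime_pow hp (by norm_num)] at this
      exact dvd_trans (by simp [pow_one]) (dvd_trans (Dvd.intro _ rfl) this)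
    have h5 : p ∣ n - 1 := dvd_trans (prime_dvd_rad hp h4 htp.ne') h3
    have h6 : p ∣ n - (n - 1) := Nat.dvd_sub ((dvd_mul_right p p).trans hpp) h5
    rw [Nat.sub_sub_self (by omega)] at h6
    exact Nat.Prime.one_lt hp |>.ne' (Nat.eq_one_of_dvd_one h6 ▸ rfl)
  refine ⟨hodd, hsqf, fun p hp hpn => ?_⟩
  have hd1 : rad (p - 1) ∣ n - 1 := by
    have : (p - 1) ∣ n.totient := by
      have := Nat.totient_dvd_of_dvd hpn
      rwa [Nat.totient_prime hp] at this
    exact dvd_trans (rad_dvd_rad this htp.ne') h3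
  refine ⟨hd1, ?_⟩
  set m := n / p with hm
  have hnm : n = p * m := (Nat.mul_div_cancel' hpn).symm
  have hm1 : 1 ≤ m := Nat.div_pos (Nat.le_of_dvd (by omega) hpn) hp.pos
  have hd2 : rad (p - 1) ∣ n - m := by
    have : rad (p - 1) ∣ (p - 1) * m := Dvd.dvd.mul_right (rad_dvd _) m
    rwa [Nat.sub_one_mul, ← hnm] at this
  have := Nat.dvd_sub hd1 hd2
  have hmn : m ≤ n := Nat.div_le_self _ _
  have heq : (n - 1) - (n - m) = m - 1 := by omega
  rwa [heq] at this

/-- Counting an AP. -/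

lemma count_ap (M d : ℕ) (hd : 0 < d) :
    ((Finset.Icc 1 M).filter (fun m => d ∣ m - 1)).card ≤ M / d + 1 := by
  classical
  have : ((Finset.Icc 1 M).filter (fun m => d ∣ m - 1)).card ≤ (Finset.range (M / d + 1)).card := by
    apply Finset.card_le_card_of_injOn (fun m => (m - 1) / d)
    · intro m hm
      simp only [Finset.mem_coe, Finset.mem_filter, Finset.mem_Icc] at hm
      simp only [Finset.mem_coe, Finset.mem_range]
      have : (m - 1) / d ≤ M / d := by
        apply Nat.le_trans (Nat.div_le_div_right (by omega)) (le_refl _)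
      omega
    · intro m hm m' hm' h
      simp only [Finset.mem_coe, Finset.mem_filter, Finset.mem_Icc] at hm hm'
      have h' : (m - 1) / d = (m' - 1) / d := h
      have e2 : m' - 1 = d * ((m' - 1) / d) := (Nat.mul_div_cancel' hm'.2).symm
      have e1 : m - 1 = d * ((m' - 1) / d) := by
        rw [← h']; exact (Nat.mul_div_cancel' hm.2).symm
      omega
  simpa using this

/-- Telescoping: ∑_{a=K}^{M} 1/a² ≤ 2/K for K ≥ 1. -/

lemma sum_inv_sq (K M : ℕ) (hK : 1 ≤ K) :
    ∑ a ∈ Finset.Icc K M, (1 : ℝ) / (a : ℝ) ^ 2 ≤ 2 / K := by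
  rcases Nat.lt_or_ge M K with h | h
  · rw [Finset.Icc_eq_empty (by omega)]
    simp; positivity
  · have key : ∀ M, K ≤ M → ∑ a ∈ Finset.Icc K M, (1 : ℝ) / (a : ℝ) ^ 2 ≤ 2 / K - 1 / M := by
      intro M
      induction M with
      | zero => intro h0; omega
      | succ M ih =>
        intro hKM
        rcases Nat.lt_or_ge M K with h1 | h1
        · have : K = M + 1 := by omega
          subst this
          rw [Finset.Icc_self, Finset.sum_singleton]
          have hMp : (0:ℝ) < (M:ℝ) + 1 := by positivity
          push_cast
          have he : 2/((M:ℝ)+1) - 1/((M:ℝ)+1) = 1/((M:ℝ)+1) := by ring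
          rw [he, div_le_div_iff₀ (by positivity) hMp]
          nlinarith [hMp]
        · have hsucc : ∑ a ∈ Finset.Icc K (M+1), (1:ℝ)/(a:ℝ)^2
              = (∑ a ∈ Finset.Icc K M, (1:ℝ)/(a:ℝ)^2) + 1/((M+1:ℕ):ℝ)^2 := by
            rw [← Finset.sum_Icc_succ_top (by omega)]
          rw [hsucc]
          have hM1 : (0:ℝ) < (M:ℝ) := by
            have : 1 ≤ M := le_trans hK h1
            exact_mod_cast this
          have step : 1/((M+1:ℕ):ℝ)^2 ≤ 1/(M:ℝ) - 1/((M+1:ℕ):ℝ) := by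
            push_cast
            rw [div_sub_div _ _ (by positivity) (by positivity)]
            rw [div_le_div_iff₀ (by positivity) (by positivity)]
            nlinarith
          have := ih h1
          push_cast at step ⊢
          linarith
    calc ∑ a ∈ Finset.Icc K M, (1 : ℝ) / (a : ℝ) ^ 2 ≤ 2 / K - 1 / M := key M h
    _ ≤ 2 / K := by
        have : (0:ℝ) < M := by exact_mod_cast lt_of_lt_of_le (by omega : 0 < K) h
        have : (0:ℝ) ≤ 1 / (M:ℝ) := by positivity
        linarith

/-- Tail version over arbitrary finsets. -/

lemma sum_inv_sq_tail (s : Finset ℕ) (A : ℝ) (hA : 0 < A) (h : ∀ a ∈ s, A ≤ (a : ℝ)) :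
    ∑ a ∈ s, (1 : ℝ) / (a : ℝ) ^ 2 ≤ 2 / A := by
  classical
  set K := ⌈A⌉₊ with hKdef
  have hK1 : 1 ≤ K := Nat.one_le_ceil_iff.2 hA
  have hsub : s ⊆ Finset.Icc K (s.sup id) := by
    intro a ha
    simp only [Finset.mem_Icc]
    exact ⟨Nat.ceil_le.2 (h a ha), Finset.le_sup (f := id) ha⟩
  calc ∑ a ∈ s, (1 : ℝ) / (a : ℝ) ^ 2
      ≤ ∑ a ∈ Finset.Icc K (s.sup id), (1 : ℝ) / (a : ℝ) ^ 2 :=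
        Finset.sum_le_sum_of_subset_of_nonneg hsub (by intros; positivity)
    _ ≤ 2 / K := sum_inv_sq _ _ hK1
    _ ≤ 2 / A := by
        apply div_le_div_of_nonneg_left (by norm_num) hA (Nat.le_ceil A)

noncomputable def decA (m : ℕ) : ℕ := ∏ p ∈ m.primeFactors, p ^ (m.factorization p % 2)

noncomputable def decB (m : ℕ) : ℕ := ∏ p ∈ m.primeFactors, p ^ (m.factorization p / 2)

lemma dec_mul (m : ℕ) (hm : m ≠ 0) : decA m * decB m ^ 2 = m := by
  rw [decA, decB, ← Finset.prod_pow, ← Finset.prod_mul_distrib]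
  have : ∀ p ∈ m.primeFactors, p ^ (m.factorization p % 2) * (p ^ (m.factorization p / 2)) ^ 2
      = p ^ m.factorization p := by
    intro p _
    rw [← pow_mul, ← pow_add]
    congr 1
    omega
  rw [Finset.prod_congr rfl this]
  conv_rhs => rw [← Nat.factorization_prod_pow_eq_self hm]
  rw [Nat.prod_factorization_eq_prod_primeFactors]

lemma decA_dvd_rad (m : ℕ) : decA m ∣ rad m := by
  apply Finset.prod_dvd_prod_of_dvd
  intro p hp
  have : m.factorization p % 2 ≤ 1 := by omega
  calc p ^ (m.factorization p % 2) ∣ p ^ 1 := pow_dvd_pow p this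
  _ = p := pow_one p

/-- The key tail bound. -/

lemma radsum (y N : ℕ) (hy : 1 ≤ y) :
    ∑ m ∈ Finset.Icc y N, (1 : ℝ) / ((m : ℝ) * (rad m : ℝ)) ≤ 6 / Real.sqrt y := by
  classical
  have hy0 : (0:ℝ) < y := by exact_mod_cast hy
  have hsq : (0:ℝ) < Real.sqrt y := Real.sqrt_pos.2 hy0
  have hposAB : ∀ m : ℕ, m ≠ 0 → 0 < decA m ∧ 0 < decB m := by
    intro m hm0
    have hdm := dec_mul m hm0
    constructor
    · rcases Nat.eq_zero_or_pos (decA m) with h | h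
      · rw [h] at hdm; simp at hdm; omega
      · exact h
    · rcases Nat.eq_zero_or_pos (decB m) with h | h
      · rw [h] at hdm; simp at hdm; omega
      · exact h
  have hpoint : ∀ m ∈ Finset.Icc y N, (1 : ℝ) / ((m : ℝ) * (rad m : ℝ))
      ≤ 1 / ((decA m : ℝ) ^ 2 * (decB m : ℝ) ^ 2) := by
    intro m hm
    simp only [Finset.mem_Icc] at hm
    have hm0 : m ≠ 0 := by omega
    obtain ⟨ha0, hb0⟩ := hposAB m hm0
    have hle : (decA m : ℝ) ^ 2 * (decB m : ℝ) ^ 2 ≤ (m : ℝ) * (rad m : ℝ) := by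
      have h1 : decA m ≤ rad m := Nat.le_of_dvd (rad_pos m) (decA_dvd_rad m)
      have h2 : decA m * decB m ^ 2 = m := dec_mul m hm0
      have hc : (decA m : ℝ) * (decB m : ℝ) ^ 2 = (m : ℝ) := by exact_mod_cast congrArg (Nat.cast : ℕ → ℝ) h2
      calc (decA m : ℝ) ^ 2 * (decB m : ℝ) ^ 2 = ((decA m : ℝ) * (decB m : ℝ)^2) * (decA m : ℝ) := by ring
      _ = (m : ℝ) * (decA m : ℝ) := by rw [hc]
      _ ≤ (m : ℝ) * (rad m : ℝ) := by
          apply mul_le_mul_of_nonneg_left _ (by positivity)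
          exact_mod_cast h1
    apply one_div_le_one_div_of_le (by positivity) hle
  set D := ((Finset.Icc 1 N) ×ˢ (Finset.Icc 1 N)).filter (fun q : ℕ × ℕ => y ≤ q.1 * q.2 ^ 2) with hD
  have himg : ∑ m ∈ Finset.Icc y N, 1 / ((decA m : ℝ) ^ 2 * (decB m : ℝ) ^ 2)
      ≤ ∑ q ∈ D, 1 / ((q.1 : ℝ) ^ 2 * (q.2 : ℝ) ^ 2) := by
    have hinj : ∀ m ∈ Finset.Icc y N, ∀ m' ∈ Finset.Icc y N,
        (fun m => (decA m, decB m)) m = (fun m => (decA m, decB m)) m' → m = m' := by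
      intro m hm m' hm' h
      simp only [Finset.mem_Icc] at hm hm'
      have h1 : decA m = decA m' := congrArg Prod.fst h
      have h2 : decB m = decB m' := congrArg Prod.snd h
      have hdm := dec_mul m (by omega)
      rw [h1, h2, dec_mul m' (by omega)] at hdm
      omega
    have himgeq : ∑ q ∈ (Finset.Icc y N).image (fun m => (decA m, decB m)),
        1 / ((q.1 : ℝ) ^ 2 * (q.2 : ℝ) ^ 2)
        = ∑ m ∈ Finset.Icc y N, 1 / ((decA m : ℝ) ^ 2 * (decB m : ℝ) ^ 2) :=
      Finset.sum_image hinj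
    rw [← himgeq]
    apply Finset.sum_le_sum_of_subset_of_nonneg
    · intro q hq
      simp only [Finset.mem_image] at hq
      obtain ⟨m, hm, rfl⟩ := hq
      simp only [Finset.mem_Icc] at hm
      have hm0 : m ≠ 0 := by omega
      obtain ⟨ha0, hb0⟩ := hposAB m hm0
      have hdm := dec_mul m hm0
      simp only [hD, Finset.mem_filter, Finset.mem_product, Finset.mem_Icc]
      have hAle : decA m ≤ m := Nat.le_of_dvd (by omega) ((decA_dvd_rad m).trans (rad_dvd m))
      have hBle : decB m ≤ m := by nlinarith [hdm]
      exact ⟨⟨⟨ha0, le_trans hAle hm.2⟩, ⟨hb0, le_trans hBle hm.2⟩⟩, by omega⟩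
    · intros; positivity
  have hDsum : ∑ q ∈ D, 1 / ((q.1 : ℝ) ^ 2 * (q.2 : ℝ) ^ 2) ≤ 6 / Real.sqrt y := by
    rw [hD, Finset.sum_filter, Finset.sum_product_right]
    -- now ∑ b ∑ a ite ...  with q = (a, b)
    set B := Nat.sqrt y with hB
    have hinner : ∀ b ∈ Finset.Icc 1 N,
        (∑ a ∈ Finset.Icc 1 N, if y ≤ a * b ^ 2 then 1 / ((a : ℝ) ^ 2 * (b : ℝ) ^ 2) else 0)
        = (1 / (b:ℝ)^2) * ∑ a ∈ (Finset.Icc 1 N).filter (fun a => y ≤ a * b ^ 2), 1 / (a:ℝ)^2 := by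
      intro b hb
      rw [Finset.mul_sum, ← Finset.sum_filter]
      apply Finset.sum_congr rfl
      intro a _
      ring
    rw [Finset.sum_congr rfl hinner]
    have hsplit := Finset.sum_filter_add_sum_filter_not (Finset.Icc 1 N) (fun b => b ≤ B)
      (fun b => (1 / (b:ℝ)^2) * ∑ a ∈ (Finset.Icc 1 N).filter (fun a => y ≤ a * b ^ 2), 1 / (a:ℝ)^2)
    rw [← hsplit]
    have hpart1 : ∑ b ∈ (Finset.Icc 1 N).filter (fun b => b ≤ B),
        (1 / (b:ℝ)^2) * ∑ a ∈ (Finset.Icc 1 N).filter (fun a => y ≤ a * b ^ 2), 1 / (a:ℝ)^2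
        ≤ 2 / Real.sqrt y := by
      have hterm : ∀ b ∈ (Finset.Icc 1 N).filter (fun b => b ≤ B),
          (1 / (b:ℝ)^2) * ∑ a ∈ (Finset.Icc 1 N).filter (fun a => y ≤ a * b ^ 2), 1 / (a:ℝ)^2
          ≤ 2 / y := by
        intro b hb
        simp only [Finset.mem_filter, Finset.mem_Icc] at hb
        have hb0 : (0:ℝ) < (b:ℝ) := by exact_mod_cast hb.1.1
        have htail : ∑ a ∈ (Finset.Icc 1 N).filter (fun a => y ≤ a * b ^ 2), 1 / (a:ℝ)^2
            ≤ 2 / ((y:ℝ) / (b:ℝ)^2) := by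
          apply sum_inv_sq_tail _ _ (by positivity)
          intro a ha
          simp only [Finset.mem_filter, Finset.mem_Icc] at ha
          rw [div_le_iff₀ (by positivity)]
          exact_mod_cast ha.2
        calc (1 / (b:ℝ)^2) * ∑ a ∈ (Finset.Icc 1 N).filter (fun a => y ≤ a * b ^ 2), 1 / (a:ℝ)^2
            ≤ (1 / (b:ℝ)^2) * (2 / ((y:ℝ) / (b:ℝ)^2)) := by
              apply mul_le_mul_of_nonneg_left htail (by positivity)
          _ = 2 / (y:ℝ) := by
              rw [div_div_eq_mul_div]
              field_simp
      calc ∑ b ∈ (Finset.Icc 1 N).filter (fun b => b ≤ B),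
          (1 / (b:ℝ)^2) * ∑ a ∈ (Finset.Icc 1 N).filter (fun a => y ≤ a * b ^ 2), 1 / (a:ℝ)^2
          ≤ ∑ b ∈ (Finset.Icc 1 N).filter (fun b => b ≤ B), (2 / (y:ℝ)) := Finset.sum_le_sum hterm
        _ = ((Finset.Icc 1 N).filter (fun b => b ≤ B)).card * (2 / (y:ℝ)) := by
            rw [Finset.sum_const, nsmul_eq_mul]
        _ ≤ (B:ℝ) * (2 / (y:ℝ)) := by
            apply mul_le_mul_of_nonneg_right _ (by positivity)
            have : ((Finset.Icc 1 N).filter (fun b => b ≤ B)).card ≤ (Finset.Icc 1 B).card := by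
              apply Finset.card_le_card
              intro b hb
              simp only [Finset.mem_filter, Finset.mem_Icc] at hb ⊢
              exact ⟨hb.1.1, hb.2⟩
            calc (((Finset.Icc 1 N).filter (fun b => b ≤ B)).card : ℝ) ≤ ((Finset.Icc 1 B).card : ℝ) := by exact_mod_cast this
            _ ≤ B := by rw [Nat.card_Icc]; simp
        _ ≤ Real.sqrt y * (2 / (y:ℝ)) := by
            apply mul_le_mul_of_nonneg_right _ (by positivity)
            have hBB' : B ^ 2 ≤ y := Nat.sqrt_le' y
            have hBB : ((B:ℝ)) * (B:ℝ) ≤ (y:ℝ) := by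
              have : B * B ≤ y := by nlinarith [hBB']
              exact_mod_cast this
            calc (B:ℝ) = Real.sqrt ((B:ℝ)^2) := (Real.sqrt_sq (by positivity)).symm
            _ ≤ Real.sqrt y := Real.sqrt_le_sqrt (by nlinarith)
        _ = 2 / Real.sqrt y := by
            have hss : Real.sqrt y * Real.sqrt y = (y:ℝ) := Real.mul_self_sqrt (le_of_lt hy0)
            rw [eq_div_iff (ne_of_gt hsq)]
            field_simp
            nlinarith [hss]
    have hpart2 : ∑ b ∈ (Finset.Icc 1 N).filter (fun b => ¬ b ≤ B),
        (1 / (b:ℝ)^2) * ∑ a ∈ (Finset.Icc 1 N).filter (fun a => y ≤ a * b ^ 2), 1 / (a:ℝ)^2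
        ≤ 4 / Real.sqrt y := by
      have hterm : ∀ b ∈ (Finset.Icc 1 N).filter (fun b => ¬ b ≤ B),
          (1 / (b:ℝ)^2) * ∑ a ∈ (Finset.Icc 1 N).filter (fun a => y ≤ a * b ^ 2), 1 / (a:ℝ)^2
          ≤ 2 * (1 / (b:ℝ)^2) := by
        intro b hb
        have htail : ∑ a ∈ (Finset.Icc 1 N).filter (fun a => y ≤ a * b ^ 2), 1 / (a:ℝ)^2
            ≤ 2 / (1:ℝ) := by
          apply sum_inv_sq_tail _ _ one_pos
          intro a ha
          simp only [Finset.mem_filter, Finset.mem_Icc] at ha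
          exact_mod_cast ha.1.1
        rw [div_one] at htail
        calc (1 / (b:ℝ)^2) * ∑ a ∈ (Finset.Icc 1 N).filter (fun a => y ≤ a * b ^ 2), 1 / (a:ℝ)^2
            ≤ (1 / (b:ℝ)^2) * 2 := mul_le_mul_of_nonneg_left htail (by positivity)
          _ = 2 * (1 / (b:ℝ)^2) := by ring
      calc ∑ b ∈ (Finset.Icc 1 N).filter (fun b => ¬ b ≤ B),
          (1 / (b:ℝ)^2) * ∑ a ∈ (Finset.Icc 1 N).filter (fun a => y ≤ a * b ^ 2), 1 / (a:ℝ)^2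
          ≤ ∑ b ∈ (Finset.Icc 1 N).filter (fun b => ¬ b ≤ B), 2 * (1 / (b:ℝ)^2) :=
            Finset.sum_le_sum hterm
        _ = 2 * ∑ b ∈ (Finset.Icc 1 N).filter (fun b => ¬ b ≤ B), 1 / (b:ℝ)^2 := by
            rw [Finset.mul_sum]
        _ ≤ 2 * (2 / Real.sqrt y) := by
            apply mul_le_mul_of_nonneg_left _ (by norm_num)
            apply sum_inv_sq_tail _ _ hsq
            intro b hb
            simp only [Finset.mem_filter, Finset.mem_Icc] at hb
            have hbB : B + 1 ≤ b := by omega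
            have h1 : y < (B + 1) ^ 2 := Nat.lt_succ_sqrt' y
            have h2 : ((B:ℝ) + 1) ≤ (b:ℝ) := by exact_mod_cast hbB
            have h3 : (y:ℝ) ≤ (b:ℝ)^2 := by
              have : (y:ℝ) < ((B:ℝ)+1)^2 := by exact_mod_cast h1
              nlinarith
            calc Real.sqrt y ≤ Real.sqrt ((b:ℝ)^2) := Real.sqrt_le_sqrt h3
            _ = (b:ℝ) := Real.sqrt_sq (by positivity)
        _ = 4 / Real.sqrt y := by ring
    have h6 : 2 / Real.sqrt y + 4 / Real.sqrt y = 6 / Real.sqrt y := by ring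
    linarith
  calc ∑ m ∈ Finset.Icc y N, (1 : ℝ) / ((m : ℝ) * (rad m : ℝ))
      ≤ ∑ m ∈ Finset.Icc y N, 1 / ((decA m : ℝ) ^ 2 * (decB m : ℝ) ^ 2) :=
        Finset.sum_le_sum hpoint
    _ ≤ ∑ q ∈ D, 1 / ((q.1 : ℝ) ^ 2 * (q.2 : ℝ) ^ 2) := himg
    _ ≤ 6 / Real.sqrt y := hDsum

/-- Chebyshev-type lower bound for the prime counting function. -/

lemma cheb_lower (N : ℕ) (hN : 144 ≤ N) :
    (N : ℝ) / (2 * Real.log N) ≤ (((Finset.Icc 1 N).filter (fun p => p.Prime)).card : ℝ) := by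
  classical
  set π : ℕ := ((Finset.Icc 1 N).filter (fun p => p.Prime)).card with hπ
  set n : ℕ := N / 2 with hn
  have hn4 : 4 ≤ n := by omega
  have key1 : 4 ^ n < n * Nat.centralBinom n := Nat.four_pow_lt_mul_centralBinom n hn4
  have hcb0 : Nat.centralBinom n ≠ 0 := Nat.centralBinom_ne_zero n
  have hbound : ∀ p ∈ (Nat.centralBinom n).primeFactors,
      p ^ (Nat.centralBinom n).factorization p ≤ 2 * n := by
    intro p hp
    rw [Nat.centralBinom_eq_two_mul_choose]
    exact Nat.pow_factorization_choose_le (by omega)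
  have key2 : Nat.centralBinom n ≤ (2 * n) ^ π := by
    have hfact : Nat.centralBinom n = ∏ p ∈ (Nat.centralBinom n).primeFactors,
        p ^ (Nat.centralBinom n).factorization p := by
      conv_lhs => rw [← Nat.factorization_prod_pow_eq_self hcb0]
      rw [Nat.prod_factorization_eq_prod_primeFactors]
    have hsub : (Nat.centralBinom n).primeFactors ⊆ (Finset.Icc 1 N).filter (fun p => p.Prime) := by
      intro p hp
      have hpp : p.Prime := Nat.prime_of_mem_primeFactors hp
      have hdvd : p ∣ Nat.centralBinom n := Nat.dvd_of_mem_primeFactors hp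
      have hν : 1 ≤ (Nat.centralBinom n).factorization p := by
        rw [← Nat.Prime.pow_dvd_iff_le_factorization hpp hcb0, pow_one]
        exact hdvd
      have hple : p ≤ 2 * n := by
        calc p = p ^ 1 := (pow_one p).symm
        _ ≤ p ^ (Nat.centralBinom n).factorization p := Nat.pow_le_pow_right hpp.pos hν
        _ ≤ 2 * n := hbound p hp
      simp only [Finset.mem_filter, Finset.mem_Icc]
      exact ⟨⟨hpp.pos, le_trans hple (by omega)⟩, hpp⟩
    calc Nat.centralBinom n = ∏ p ∈ (Nat.centralBinom n).primeFactors,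
        p ^ (Nat.centralBinom n).factorization p := hfact
    _ ≤ ∏ p ∈ (Nat.centralBinom n).primeFactors, (2 * n) := Finset.prod_le_prod' hbound
    _ = (2 * n) ^ (Nat.centralBinom n).primeFactors.card := by rw [Finset.prod_const]
    _ ≤ (2 * n) ^ π := by
        apply Nat.pow_le_pow_right (by omega)
        exact Finset.card_le_card hsub
  have hNR : (2:ℝ) ≤ (N:ℝ) := by exact_mod_cast (by omega : 2 ≤ N)
  have hlogN0 : 0 < Real.log N := Real.log_pos (by linarith)
  have hnat : 4 ^ n ≤ N ^ (π + 1) := by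
    calc 4 ^ n ≤ n * Nat.centralBinom n := le_of_lt key1
    _ ≤ (2*n) * (2*n) ^ π := Nat.mul_le_mul (by omega) key2
    _ = (2*n) ^ (π + 1) := by ring
    _ ≤ N ^ (π+1) := Nat.pow_le_pow_left (by omega) _
  have hreal : (n:ℝ) * (2 * Real.log 2) ≤ ((π:ℝ) + 1) * Real.log N := by
    have h4 : ((4:ℕ):ℝ) ^ n ≤ ((N:ℕ):ℝ) ^ (π+1) := by exact_mod_cast hnat
    have hl := Real.log_le_log (by positivity) h4
    rw [Real.log_pow, Real.log_pow] at hl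
    have h42 : Real.log ((4:ℕ):ℝ) = 2 * Real.log 2 := by
      rw [show ((4:ℕ):ℝ) = 2^2 by norm_num, Real.log_pow]
      push_cast; ring
    rw [h42] at hl
    push_cast at hl ⊢
    linarith
  have hs2 : Real.sqrt N ^ 2 = (N:ℝ) := Real.sq_sqrt (by positivity)
  have hs0 : (0:ℝ) ≤ Real.sqrt N := Real.sqrt_nonneg _
  have hs12 : (12:ℝ) ≤ Real.sqrt N := by
    have h144 : ((144:ℕ):ℝ) ≤ (N:ℝ) := by exact_mod_cast hN
    have : Real.sqrt 144 ≤ Real.sqrt N := Real.sqrt_le_sqrt (by push_cast at h144 ⊢; linarith)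
    rwa [show (144:ℝ) = 12^2 by norm_num, Real.sqrt_sq (by norm_num)] at this
  have hlogN : Real.log N ≤ 2 * Real.sqrt N := by
    have hlogeq : Real.log ((Real.sqrt N)^2) = 2 * Real.log (Real.sqrt N) := by
      rw [Real.log_pow]; push_cast; ring
    rw [hs2] at hlogeq
    have h1 : Real.log (Real.sqrt N) ≤ Real.sqrt N - 1 :=
      Real.log_le_sub_one_of_pos (by nlinarith)
    linarith
  have hlog2 : 0.6931471803 < Real.log 2 := Real.log_two_gt_d9
  have hn2 : ((N:ℝ) - 1) / 2 ≤ (n:ℝ) := by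
    have h1 : N ≤ 2 * n + 1 := by omega
    have h2 : (N:ℝ) ≤ 2 * (n:ℝ) + 1 := by exact_mod_cast h1
    linarith
  have hN1 : (0:ℝ) ≤ (N:ℝ) - 1 := by linarith
  have hA : (n:ℝ) * (2 * Real.log 2) - Real.log N ≤ (π:ℝ) * Real.log N := by nlinarith [hreal]
  have h3 : ((N:ℝ) - 1) * 0.6931471803 ≤ ((N:ℝ) - 1) * Real.log 2 :=
    mul_le_mul_of_nonneg_left (le_of_lt hlog2) hN1
  have hB : ((N:ℝ) - 1) * Real.log 2 ≤ (n:ℝ) * (2 * Real.log 2) := by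
    nlinarith [hn2, hlog2]
  have hfin : (N:ℝ) / 2 ≤ (π:ℝ) * Real.log N := by
    nlinarith [hA, hB, h3, hs2, hs12, hlogN, mul_nonneg (sub_nonneg.2 hs12) hs0]
  rw [div_le_iff₀ (by positivity)]
  nlinarith [hfin]

/-- Harmonic sum bound. -/

lemma harmonic_le_log (y : ℕ) (hy : 1 ≤ y) :
    ∑ k ∈ Finset.Icc 2 y, (1 : ℝ) / k ≤ Real.log y := by
  induction y with
  | zero => omega
  | succ y ih =>
    rcases Nat.lt_or_ge y 1 with h1 | h1
    · have : y = 0 := by omega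
      subst this
      simp
    · have hstep : (1:ℝ) / (y+1) ≤ Real.log (y+1) - Real.log y := by
        have hy0 : (0:ℝ) < y := by exact_mod_cast h1
        have h2 : Real.log ((y:ℝ) / (y+1)) ≤ (y:ℝ)/(y+1) - 1 :=
          Real.log_le_sub_one_of_pos (by positivity)
        rw [Real.log_div (by positivity) (by positivity)] at h2
        have : (y:ℝ)/(y+1) - 1 = - (1 / (y+1)) := by field_simp; ring
        rw [this] at h2
        linarith
      have hins := Finset.sum_Icc_succ_top (by omega : 2 ≤ y+1) (fun k => (1:ℝ)/k)
      rw [hins]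
      have := ih h1
      push_cast at hstep ⊢
      linarith

/-- Rankin-type bound for squarefree smooth numbers. -/

lemma smooth_bound (x : ℝ) (hx : 1 ≤ x) (y : ℕ) (hy : 16 ≤ y) (S : Finset ℕ)
    (hS : ∀ n ∈ S, 1 ≤ n ∧ (n : ℝ) ≤ x ∧ Squarefree n ∧ ∀ p ∈ n.primeFactors, p ≤ y) :
    (S.card : ℝ) ≤ x * Real.exp (- Real.log x / Real.log y) * (y : ℝ) ^ 3 := by
  classical
  have hy2 : (2:ℝ) ≤ (y:ℝ) := by exact_mod_cast (by omega : 2 ≤ y)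
  have hlogy : 1 < Real.log y := by
    have h1 : Real.log (Real.exp 1) < Real.log y := by
      apply Real.log_lt_log (Real.exp_pos 1)
      calc Real.exp 1 < 3 := by
            have := Real.exp_one_lt_d9
            linarith
      _ ≤ (y:ℝ) := by exact_mod_cast (by omega : 3 ≤ y)
    rwa [Real.log_exp] at h1
  have hlogy0 : 0 < Real.log y := by linarith
  set σ : ℝ := 1 - 1 / Real.log y with hσ
  have hσ0 : 0 < σ := by
    have : 1 / Real.log y < 1 := by
      rw [div_lt_one hlogy0]; exact hlogy
    simp only [hσ]; linarith
  have hσ1 : σ ≤ 1 := by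
    have : 0 < 1 / Real.log y := by positivity
    simp only [hσ]; linarith
  set Q : Finset ℕ := (Finset.Icc 1 y).filter (fun p => p.Prime) with hQ
  -- step 1 : card ≤ ∑ (x/n)^σ
  have step1 : (S.card : ℝ) ≤ ∑ n ∈ S, (x / (n:ℝ)) ^ σ := by
    have : ∀ n ∈ S, (1:ℝ) ≤ (x / (n:ℝ)) ^ σ := by
      intro n hn
      obtain ⟨h1, h2, _, _⟩ := hS n hn
      have hn0 : (0:ℝ) < (n:ℝ) := by exact_mod_cast h1
      apply Real.one_le_rpow _ (le_of_lt hσ0)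
      rw [le_div_iff₀ hn0]; linarith
    calc (S.card : ℝ) = ∑ n ∈ S, (1:ℝ) := by rw [Finset.sum_const, nsmul_eq_mul, mul_one]
    _ ≤ ∑ n ∈ S, (x / (n:ℝ)) ^ σ := Finset.sum_le_sum this
  -- step 2 : factor out x^σ
  have step2 : ∑ n ∈ S, (x / (n:ℝ)) ^ σ = x ^ σ * ∑ n ∈ S, ((n:ℝ) ^ σ)⁻¹ := by
    rw [Finset.mul_sum]
    apply Finset.sum_congr rfl
    intro n hn
    obtain ⟨h1, _, _, _⟩ := hS n hn
    have hn0 : (0:ℝ) ≤ (n:ℝ) := by positivity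
    rw [Real.div_rpow (by linarith) hn0, div_eq_mul_inv]
  -- step 3 : ∑ 1/n^σ ≤ ∏ (1 + p^{-σ})
  have step3 : ∑ n ∈ S, ((n:ℝ) ^ σ)⁻¹ ≤ ∏ p ∈ Q, (1 + ((p:ℝ) ^ σ)⁻¹) := by
    have hprodform : ∏ p ∈ Q, (((p:ℝ) ^ σ)⁻¹ + 1) = ∑ A ∈ Q.powerset, ∏ p ∈ A, ((p:ℝ) ^ σ)⁻¹ := by
      rw [Finset.prod_add]
      apply Finset.sum_congr rfl
      intro A hA
      rw [Finset.prod_const_one, mul_one]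
    have hterm : ∀ n ∈ S, ((n:ℝ) ^ σ)⁻¹ = ∏ p ∈ n.primeFactors, ((p:ℝ) ^ σ)⁻¹ := by
      intro n hn
      obtain ⟨h1, _, hsq, _⟩ := hS n hn
      have : ((n:ℝ)) = ∏ p ∈ n.primeFactors, (p:ℝ) := by
        rw [← Nat.cast_prod]
        exact_mod_cast (congrArg (Nat.cast : ℕ → ℝ) (Nat.prod_primeFactors_of_squarefree hsq)).symm
      rw [this, ← Real.finset_prod_rpow _ _ (fun p _ => by positivity) σ]
      rw [← Finset.prod_inv_distrib]
    have hinj : ∀ n ∈ S, ∀ n' ∈ S, n.primeFactors = n'.primeFactors → n = n' := by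
      intro n hn n' hn' h
      obtain ⟨_, _, hsq, _⟩ := hS n hn
      obtain ⟨_, _, hsq', _⟩ := hS n' hn'
      rw [← Nat.prod_primeFactors_of_squarefree hsq, ← Nat.prod_primeFactors_of_squarefree hsq', h]
    have himg : ∑ n ∈ S, ((n:ℝ) ^ σ)⁻¹
        = ∑ A ∈ (S.image (fun n => n.primeFactors) : Finset (Finset ℕ)), ∏ p ∈ A, ((p:ℝ) ^ σ)⁻¹ := by
      rw [Finset.sum_image hinj]
      exact Finset.sum_congr rfl hterm
    rw [himg]
    have hsub : S.image (fun n => n.primeFactors) ⊆ Q.powerset := by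
      intro A hA
      simp only [Finset.mem_image] at hA
      obtain ⟨n, hn, rfl⟩ := hA
      obtain ⟨h1, _, _, hp⟩ := hS n hn
      rw [Finset.mem_powerset]
      intro p hpn
      have hpp := Nat.prime_of_mem_primeFactors hpn
      simp only [hQ, Finset.mem_filter, Finset.mem_Icc]
      exact ⟨⟨hpp.pos, hp p hpn⟩, hpp⟩
    calc ∑ A ∈ (S.image (fun n => n.primeFactors) : Finset (Finset ℕ)), ∏ p ∈ A, ((p:ℝ) ^ σ)⁻¹
        ≤ ∑ A ∈ Q.powerset, ∏ p ∈ A, ((p:ℝ) ^ σ)⁻¹ := by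
          apply Finset.sum_le_sum_of_subset_of_nonneg hsub
          intro A _ _
          apply Finset.prod_nonneg
          intro p _
          positivity
      _ = ∏ p ∈ Q, (((p:ℝ) ^ σ)⁻¹ + 1) := hprodform.symm
      _ = ∏ p ∈ Q, (1 + ((p:ℝ) ^ σ)⁻¹) := by
          apply Finset.prod_congr rfl; intros; ring
  -- step 4 : ∏ (1+p^{-σ}) ≤ exp (∑ p^{-σ})
  have step4 : ∏ p ∈ Q, (1 + ((p:ℝ) ^ σ)⁻¹) ≤ Real.exp (∑ p ∈ Q, ((p:ℝ) ^ σ)⁻¹) := by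
    rw [Real.exp_sum]
    apply Finset.prod_le_prod
    · intro p _; positivity
    · intro p _
      have := Real.add_one_le_exp (((p:ℝ) ^ σ)⁻¹)
      linarith
  -- step 5 : p^{-σ} ≤ e / p
  have step5 : ∀ p ∈ Q, ((p:ℝ) ^ σ)⁻¹ ≤ Real.exp 1 * (1 / p) := by
    intro p hp
    simp only [hQ, Finset.mem_filter, Finset.mem_Icc] at hp
    have hp0 : (0:ℝ) < (p:ℝ) := by exact_mod_cast hp.2.pos
    have hp1 : (1:ℝ) ≤ (p:ℝ) := by exact_mod_cast hp.2.one_lt.le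
    have hple : (p:ℝ) ≤ (y:ℝ) := by exact_mod_cast hp.1.2
    have hkey : (p:ℝ) ^ σ = (p:ℝ) * ((p:ℝ) ^ (1 / Real.log y))⁻¹ := by
      rw [hσ, Real.rpow_sub hp0, Real.rpow_one, div_eq_mul_inv]
    rw [hkey]
    have hexp : (p:ℝ) ^ (1 / Real.log y) ≤ Real.exp 1 := by
      rw [Real.rpow_def_of_pos hp0]
      apply Real.exp_le_exp.2
      rw [mul_one_div, div_le_one hlogy0]
      exact Real.log_le_log hp0 hple
    have hexp0 : (0:ℝ) < (p:ℝ) ^ (1 / Real.log y) := Real.rpow_pos_of_pos hp0 _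
    rw [mul_inv, inv_inv]
    rw [mul_comm ((p:ℝ))⁻¹ _, ← one_div (p:ℝ)] at *
    apply mul_le_mul_of_nonneg_right hexp (by positivity)
  -- step 6 : combine exp sum
  have step6 : ∑ p ∈ Q, ((p:ℝ) ^ σ)⁻¹ ≤ 3 * Real.log y := by
    have h1 : ∑ p ∈ Q, ((p:ℝ) ^ σ)⁻¹ ≤ ∑ p ∈ Q, Real.exp 1 * (1 / p) :=
      Finset.sum_le_sum step5
    have h2 : ∑ p ∈ Q, Real.exp 1 * (1/(p:ℝ)) = Real.exp 1 * ∑ p ∈ Q, (1/(p:ℝ)) := by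
      rw [Finset.mul_sum]
    have h3 : ∑ p ∈ Q, (1/(p:ℝ)) ≤ ∑ k ∈ Finset.Icc 2 y, (1:ℝ)/k := by
      apply Finset.sum_le_sum_of_subset_of_nonneg
      · intro p hp
        simp only [hQ, Finset.mem_filter, Finset.mem_Icc] at hp
        simp only [Finset.mem_Icc]
        exact ⟨hp.2.two_le, hp.1.2⟩
      · intros; positivity
    have h4 := harmonic_le_log y (by omega)
    have h5 : Real.exp 1 ≤ 3 := by
      have := Real.exp_one_lt_d9; linarith
    have hlogy0' : (0:ℝ) ≤ Real.log y := le_of_lt hlogy0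
    calc ∑ p ∈ Q, ((p:ℝ) ^ σ)⁻¹ ≤ Real.exp 1 * ∑ p ∈ Q, (1/(p:ℝ)) := by rw [← h2]; exact h1
    _ ≤ Real.exp 1 * Real.log y := by
        apply mul_le_mul_of_nonneg_left _ (le_of_lt (Real.exp_pos 1))
        linarith
    _ ≤ 3 * Real.log y := mul_le_mul_of_nonneg_right h5 hlogy0'
  -- step 7 : exp(3 log y) = y^3
  have step7 : Real.exp (3 * Real.log y) = (y:ℝ)^3 := by
    rw [mul_comm, Real.exp_mul, Real.exp_log (by linarith : (0:ℝ) < (y:ℝ))]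
    rw [show ((3:ℝ)) = ((3:ℕ):ℝ) by norm_num, Real.rpow_natCast]
  -- step 8 : x^σ = x * exp(-log x / log y)
  have step8 : x ^ σ = x * Real.exp (- Real.log x / Real.log y) := by
    have hx0 : (0:ℝ) < x := by linarith
    have hkey : x ^ (-(1/Real.log y)) = Real.exp (- Real.log x / Real.log y) := by
      rw [Real.rpow_def_of_pos hx0]
      congr 1
      ring
    rw [hσ, sub_eq_add_neg, Real.rpow_add hx0, Real.rpow_one, hkey]
  calc (S.card : ℝ) ≤ ∑ n ∈ S, (x / (n:ℝ)) ^ σ := step1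
  _ = x ^ σ * ∑ n ∈ S, ((n:ℝ) ^ σ)⁻¹ := step2
  _ ≤ x ^ σ * ∏ p ∈ Q, (1 + ((p:ℝ) ^ σ)⁻¹) := by
      apply mul_le_mul_of_nonneg_left step3 (Real.rpow_nonneg (by linarith) σ)
  _ ≤ x ^ σ * Real.exp (3 * Real.log y) := by
      apply mul_le_mul_of_nonneg_left _ (Real.rpow_nonneg (by linarith) σ)
      calc ∏ p ∈ Q, (1 + ((p:ℝ) ^ σ)⁻¹) ≤ Real.exp (∑ p ∈ Q, ((p:ℝ) ^ σ)⁻¹) := step4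
      _ ≤ Real.exp (3 * Real.log y) := Real.exp_le_exp.2 step6
  _ = x * Real.exp (- Real.log x / Real.log y) * (y:ℝ)^3 := by rw [step7, step8]

/-- Largest prime factor of `n`, as `sup`. -/

lemma sup_primeFactors_mem {n : ℕ} (h : 1 < n) : n.primeFactors.sup id ∈ n.primeFactors := by
  have hne : n.primeFactors.Nonempty := Nat.nonempty_primeFactors.2 h
  rw [← Finset.sup'_eq_sup hne id]
  exact Finset.sup'_mem _ (fun a ha b hb => by
    rcases le_total a b with hab | hab
    · rw [sup_eq_right.2 hab]; exact hb
    · rw [sup_eq_left.2 hab]; exact ha) _ hne _ (fun a ha => ha)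

lemma S2_bound (x : ℝ) (N y : ℕ) (hN : (N:ℝ) ≤ x) (hy : 1 ≤ y) :
    ((((Finset.Icc 1 N).filter
        (fun n => 1 < n ∧ ¬ n.Prime ∧ rad n.totient ∣ n - 1)).filter
        (fun n => ¬ (n.primeFactors.sup id ≤ y))).card : ℝ)
      ≤ 12 * x / Real.sqrt y := by
  classical
  have hx0 : (0:ℝ) ≤ x := le_trans (by positivity) hN
  have hsqy : (0:ℝ) < Real.sqrt y := Real.sqrt_pos.2 (by exact_mod_cast hy)
  set S₂ := (((Finset.Icc 1 N).filter
        (fun n => 1 < n ∧ ¬ n.Prime ∧ rad n.totient ∣ n - 1)).filter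
        (fun n => ¬ (n.primeFactors.sup id ≤ y))) with hS₂
  set PP := (Finset.Icc 1 N).filter (fun P => P.Prime ∧ y < P) with hPP
  -- basic facts about members of S₂
  have hmem : ∀ n ∈ S₂, n ∈ Finset.Icc 1 N ∧ 1 < n ∧ ¬ n.Prime ∧ rad n.totient ∣ n - 1
      ∧ y < n.primeFactors.sup id := by
    intro n hn
    simp only [hS₂, Finset.mem_filter] at hn
    exact ⟨hn.1.1, hn.1.2.1, hn.1.2.2.1, hn.1.2.2.2, by omega⟩
  have hsub : S₂ ⊆ PP.biUnion (fun P => S₂.filter (fun n => n.primeFactors.sup id = P)) := by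
    intro n hn
    obtain ⟨hIcc, h1, h2, h3, h4⟩ := hmem n hn
    simp only [Finset.mem_Icc] at hIcc
    set P := n.primeFactors.sup id with hPdef
    have hPmem : P ∈ n.primeFactors := sup_primeFactors_mem h1
    have hPp : P.Prime := Nat.prime_of_mem_primeFactors hPmem
    have hPdvd : P ∣ n := Nat.dvd_of_mem_primeFactors hPmem
    rw [Finset.mem_biUnion]
    refine ⟨P, ?_, ?_⟩
    · simp only [hPP, Finset.mem_filter, Finset.mem_Icc]
      exact ⟨⟨hPp.pos, le_trans (Nat.le_of_dvd (by omega) hPdvd) hIcc.2⟩, hPp, h4⟩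
    · exact Finset.mem_filter.mpr ⟨hn, rfl⟩
  -- per-P bound
  have hper : ∀ P ∈ PP, ((S₂.filter (fun n => n.primeFactors.sup id = P)).card : ℝ)
      ≤ 2 * x / ((P : ℝ) * (rad (P-1) : ℝ)) := by
    intro P hPmem'
    simp only [hPP, Finset.mem_filter, Finset.mem_Icc] at hPmem'
    obtain ⟨⟨hP1, hPN⟩, hPp, hyP⟩ := hPmem'
    set d := rad (P - 1) with hd
    have hd0 : 0 < d := rad_pos _
    set T := S₂.filter (fun n => n.primeFactors.sup id = P) with hT
    have hTfacts : ∀ n ∈ T, P ∣ n ∧ d ∣ n / P - 1 ∧ 2 ≤ n / P ∧ n ∈ Finset.Icc 1 N := by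
      intro n hn
      simp only [hT, Finset.mem_filter] at hn
      obtain ⟨hIcc, h1, h2, h3, _⟩ := hmem n hn.1
      have hPmem2 : P ∈ n.primeFactors := hn.2 ▸ sup_primeFactors_mem h1
      have hPdvd : P ∣ n := Nat.dvd_of_mem_primeFactors hPmem2
      obtain ⟨_, _, hstr⟩ := structure_lemma h1 h2 h3
      obtain ⟨_, hcof⟩ := hstr P hPp hPdvd
      have hm1 : 1 ≤ n / P := Nat.div_pos (Nat.le_of_dvd (by omega) hPdvd) hPp.pos
      have hm2 : 2 ≤ n / P := by
        rcases Nat.lt_or_ge (n / P) 2 with hlt | hge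
        · exfalso
          have : n / P = 1 := by omega
          have h6 : n / P = 1 := Nat.le_antisymm (Nat.lt_succ_iff.mp hlt) hm1
          have hnP : n = P := by
            have h5 := Nat.div_mul_cancel hPdvd
            rw [h6, one_mul] at h5
            omega
          exact h2 (hnP ▸ hPp)
        · exact hge
      exact ⟨hPdvd, hcof, hm2, hIcc⟩
    rcases Finset.eq_empty_or_nonempty T with hTe | ⟨n₀, hn₀⟩
    · rw [hTe]
      simp only [Finset.card_empty, Nat.cast_zero]
      positivity
    · -- from the witness, d * P ≤ N
      obtain ⟨hPdvd₀, hdvd₀, hm₀, hIcc₀⟩ := hTfacts n₀ hn₀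
      simp only [Finset.mem_Icc] at hIcc₀
      have hdP : d * P ≤ N := by
        have h1 : d ≤ n₀ / P - 1 := Nat.le_of_dvd (by omega) hdvd₀
        have h2 : (n₀ / P) * P = n₀ := Nat.div_mul_cancel hPdvd₀
        calc d * P ≤ (n₀ / P - 1) * P := Nat.mul_le_mul_right P h1
        _ ≤ n₀ := by
            have : (n₀ / P - 1) * P = n₀ - P := by
              rw [Nat.sub_mul, h2, one_mul]
            omega
        _ ≤ N := hIcc₀.2
      -- inject into the AP count
      have hcard : T.card ≤ N / (P * d) + 1 := by
        have hinj : T.card ≤ ((Finset.Icc 1 (N / P)).filter (fun m => d ∣ m - 1)).card := by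
          apply Finset.card_le_card_of_injOn (fun n => n / P)
          · intro n hn
            obtain ⟨hPdvd, hdvd, hm2, hIcc⟩ := hTfacts n hn
            simp only [Finset.mem_Icc] at hIcc
            simp only [Finset.mem_coe, Finset.mem_filter, Finset.mem_Icc]
            exact ⟨⟨by omega, Nat.div_le_div_right hIcc.2⟩, hdvd⟩
          · intro n hn n' hn' h
            obtain ⟨hPdvd, _, _, _⟩ := hTfacts n (by exact hn)
            obtain ⟨hPdvd', _, _, _⟩ := hTfacts n' (by exact hn')
            have e1 : P * (n / P) = n := Nat.mul_div_cancel' hPdvd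
            have e2 : P * (n' / P) = n' := Nat.mul_div_cancel' hPdvd'
            have h7 : n / P = n' / P := h
            rw [← e1, h7, e2]
        calc T.card ≤ ((Finset.Icc 1 (N / P)).filter (fun m => d ∣ m - 1)).card := hinj
        _ ≤ N / P / d + 1 := count_ap (N / P) d hd0
        _ = N / (P * d) + 1 := by rw [Nat.div_div_eq_div_mul]
      -- cast to ℝ
      have hPd0 : (0:ℝ) < (P:ℝ) * (d:ℝ) := by
        have : 0 < P * d := Nat.mul_pos hPp.pos hd0
        exact_mod_cast this
      have hc1 : ((N / (P * d) : ℕ) : ℝ) ≤ x / ((P:ℝ) * (d:ℝ)) := by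
        calc ((N / (P * d) : ℕ) : ℝ) ≤ (N : ℝ) / ((P * d : ℕ) : ℝ) := Nat.cast_div_le
        _ ≤ x / ((P:ℝ) * (d:ℝ)) := by
            push_cast
            gcongr
      have hc2 : (1:ℝ) ≤ x / ((P:ℝ) * (d:ℝ)) := by
        rw [le_div_iff₀ hPd0]
        have : ((P * d : ℕ) : ℝ) ≤ (N:ℝ) := by exact_mod_cast (by rw [mul_comm] at hdP; exact hdP)
        push_cast at this
        linarith
      calc (T.card : ℝ) ≤ ((N / (P * d) : ℕ) : ℝ) + 1 := by exact_mod_cast hcard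
      _ ≤ x / ((P:ℝ) * (d:ℝ)) + x / ((P:ℝ) * (d:ℝ)) := by linarith
      _ = 2 * x / ((P : ℝ) * (d : ℝ)) := by ring
  -- sum up
  have hsum : (S₂.card : ℝ) ≤ ∑ P ∈ PP, 2 * x / ((P : ℝ) * (rad (P-1) : ℝ)) := by
    have h1 : S₂.card ≤ ∑ P ∈ PP, (S₂.filter (fun n => n.primeFactors.sup id = P)).card :=
      le_trans (Finset.card_le_card hsub) (Finset.card_biUnion_le)
    calc (S₂.card : ℝ) ≤ (∑ P ∈ PP, ((S₂.filter (fun n => n.primeFactors.sup id = P)).card) : ℕ) := by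
          exact_mod_cast h1
    _ = ∑ P ∈ PP, (((S₂.filter (fun n => n.primeFactors.sup id = P)).card : ℕ) : ℝ) := by
          push_cast; ring
    _ ≤ ∑ P ∈ PP, 2 * x / ((P : ℝ) * (rad (P-1) : ℝ)) := Finset.sum_le_sum hper
  -- reindex P ↦ P - 1 and apply radsum
  have hre : ∑ P ∈ PP, 2 * x / ((P : ℝ) * (rad (P-1) : ℝ))
      ≤ 2 * x * ∑ m ∈ Finset.Icc y N, (1:ℝ) / ((m:ℝ) * (rad m : ℝ)) := by
    have hstep : ∀ P ∈ PP, 2 * x / ((P : ℝ) * (rad (P-1) : ℝ))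
        ≤ 2 * x * ((1:ℝ) / (((P-1 : ℕ):ℝ) * (rad (P-1) : ℝ))) := by
      intro P hP
      simp only [hPP, Finset.mem_filter, Finset.mem_Icc] at hP
      have hP2 : 2 ≤ P := by
        have := hP.2.1.two_le; omega
      have hm1 : (1:ℝ) ≤ ((P-1:ℕ):ℝ) := by exact_mod_cast (by omega : 1 ≤ P - 1)
      have hrp : (0:ℝ) < (rad (P-1) : ℝ) := by exact_mod_cast rad_pos (P-1)
      have hcast : ((P-1:ℕ):ℝ) = (P:ℝ) - 1 := by
        push_cast [Nat.cast_sub (by omega : 1 ≤ P)]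
        ring
      rw [div_eq_mul_one_div]
      apply mul_le_mul_of_nonneg_left _ (by positivity)
      apply one_div_le_one_div_of_le (by positivity)
      apply mul_le_mul_of_nonneg_right _ (le_of_lt hrp)
      rw [hcast]; linarith
    calc ∑ P ∈ PP, 2 * x / ((P : ℝ) * (rad (P-1) : ℝ))
        ≤ ∑ P ∈ PP, 2 * x * ((1:ℝ) / (((P-1 : ℕ):ℝ) * (rad (P-1) : ℝ))) := Finset.sum_le_sum hstep
    _ = ∑ m ∈ PP.image (fun P : ℕ => P - 1), 2 * x * ((1:ℝ) / ((m:ℝ) * (rad m : ℝ))) := by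
        have hinj2 : ∀ P ∈ PP, ∀ P' ∈ PP, P - 1 = P' - 1 → P = P' := by
          intro P hP P' hP' h
          simp only [hPP, Finset.mem_filter, Finset.mem_Icc] at hP hP'
          omega
        exact (Finset.sum_image (f := fun m : ℕ => 2 * x * ((1:ℝ) / ((m:ℝ) * (rad m : ℝ))))
          (g := fun P : ℕ => P - 1) hinj2).symm
    _ ≤ ∑ m ∈ Finset.Icc y N, 2 * x * ((1:ℝ) / ((m:ℝ) * (rad m : ℝ))) := by
        apply Finset.sum_le_sum_of_subset_of_nonneg
        · intro m hm
          simp only [Finset.mem_image] at hm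
          obtain ⟨P, hP, rfl⟩ := hm
          simp only [hPP, Finset.mem_filter, Finset.mem_Icc] at hP
          simp only [Finset.mem_Icc]
          omega
        · intro m _ _
          have := rad_pos m
          positivity
    _ = 2 * x * ∑ m ∈ Finset.Icc y N, (1:ℝ) / ((m:ℝ) * (rad m : ℝ)) := by
        rw [Finset.mul_sum]
  have hfinal := radsum y N hy
  calc (S₂.card : ℝ) ≤ ∑ P ∈ PP, 2 * x / ((P : ℝ) * (rad (P-1) : ℝ)) := hsum
  _ ≤ 2 * x * ∑ m ∈ Finset.Icc y N, (1:ℝ) / ((m:ℝ) * (rad m : ℝ)) := hre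
  _ ≤ 2 * x * (6 / Real.sqrt y) := by
      apply mul_le_mul_of_nonneg_left hfinal (by positivity)
  _ = 12 * x / Real.sqrt y := by ring

set_option maxHeartbeats 1000000 in

theorem K_little_o_pi :
    ∀ ε : ℝ, 0 < ε → ∃ x₀ : ℝ, ∀ x : ℝ, x₀ ≤ x →
      ((((Finset.Icc 1 ⌊x⌋₊).filter
        (fun n => 1 < n ∧ ¬ n.Prime ∧ rad n.totient ∣ n - 1)).card : ℝ))
        ≤ ε * (((Finset.Icc 1 ⌊x⌋₊).filter (fun p => p.Prime)).card : ℝ) := by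
  intro ε hε
  classical
  set c : ℝ := max (Real.log (8 / ε)) 0 with hc
  have hc0 : 0 ≤ c := le_max_right _ _
  set L₀ : ℝ := (480 + 12 * c) ^ 2 + (192 / ε) ^ 2 + 1000000 with hL₀
  refine ⟨Real.exp L₀, fun x hx => ?_⟩
  have hL₀6 : 1000000 ≤ L₀ := by
    have h1 : 0 ≤ (480 + 12 * c) ^ 2 := by positivity
    have h2 : 0 ≤ (192 / ε) ^ 2 := by positivity
    simp only [hL₀]; linarith
  have hxpos : (0:ℝ) < x := lt_of_lt_of_le (Real.exp_pos L₀) hx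
  set L : ℝ := Real.log x with hLdef
  have hLL0 : L₀ ≤ L := by
    have := Real.log_le_log (Real.exp_pos L₀) hx
    rwa [Real.log_exp] at this
  have hL6 : 1000000 ≤ L := le_trans hL₀6 hLL0
  have hLpos : (0:ℝ) < L := by linarith
  -- x is large
  have hxbig : 1000001 ≤ x := by
    have h1 : L₀ + 1 ≤ Real.exp L₀ := by
      have := Real.add_one_le_exp L₀
      linarith
    linarith
  have hx1 : (1:ℝ) ≤ x := by linarith
  set N : ℕ := ⌊x⌋₊ with hNdef
  set y : ℕ := ⌊L ^ 3⌋₊ with hydef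
  have hN1 : (N:ℝ) ≤ x := Nat.floor_le (by linarith)
  have hN2 : x - 1 ≤ (N:ℝ) := by
    have := Nat.lt_floor_add_one x
    linarith
  have hN144 : 144 ≤ N := by
    have : (144:ℝ) ≤ x := by linarith
    exact_mod_cast Nat.le_floor (by exact_mod_cast this)
  have hL3big : (1000:ℝ) ≤ L ^ 3 := by
    have h10 : (10:ℝ) ≤ L := by linarith
    nlinarith [sq_nonneg (L - 10), sq_nonneg L, h10]
  have hyU : (y:ℝ) ≤ L ^ 3 := Nat.floor_le (by positivity)
  have hyL : L ^ 3 - 1 ≤ (y:ℝ) := by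
    have := Nat.lt_floor_add_one (L ^ 3)
    linarith
  have hy16 : 16 ≤ y := by
    have : (16:ℝ) ≤ L ^ 3 := by linarith
    exact_mod_cast Nat.le_floor (by exact_mod_cast this)
  have hy1 : 1 ≤ y := by omega
  -- prime counting lower bound
  set π : ℕ := ((Finset.Icc 1 N).filter (fun p => p.Prime)).card with hπdef
  have hπ : x / (4 * L) ≤ (π:ℝ) := by
    have hNpos : (0:ℝ) < (N:ℝ) := by
      have : (0:ℕ) < N := by omega
      exact_mod_cast this
    have hNlog : Real.log N ≤ L := Real.log_le_log hNpos hN1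
    have hNlog0 : 0 < Real.log N := by
      apply Real.log_pos
      have h2 : (2:ℕ) ≤ N := by omega
      have h3 : (2:ℝ) ≤ (N:ℝ) := by exact_mod_cast h2
      linarith
    have hcheb := cheb_lower N hN144
    have step1 : x / (4 * L) ≤ (x - 1) / (2 * L) := by
      rw [div_le_div_iff₀ (by positivity) (by positivity)]
      nlinarith
    have step2 : (x - 1) / (2 * L) ≤ (N:ℝ) / (2 * L) := by gcongr
    have step3 : (N:ℝ) / (2 * L) ≤ (N:ℝ) / (2 * Real.log N) := by gcongr
    linarith
  -- split the set
  set S : Finset ℕ := (Finset.Icc 1 N).filter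
      (fun n => 1 < n ∧ ¬ n.Prime ∧ rad n.totient ∣ n - 1) with hSdef
  set S₁ : Finset ℕ := S.filter (fun n => n.primeFactors.sup id ≤ y) with hS₁def
  set S₂ : Finset ℕ := S.filter (fun n => ¬ (n.primeFactors.sup id ≤ y)) with hS₂def
  have hsplit : S₁.card + S₂.card = S.card :=
    Finset.card_filter_add_card_filter_not _
  -- S₁ bound
  have hS₁bound : (S₁.card : ℝ) ≤ x * Real.exp (- L / Real.log y) * (y : ℝ) ^ 3 := by
    apply smooth_bound x hx1 y hy16
    intro n hn
    simp only [hS₁def, hSdef, Finset.mem_filter, Finset.mem_Icc] at hn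
    obtain ⟨⟨⟨hn1, hnN⟩, hgt, hnp, hdvd⟩, hsup⟩ := hn
    obtain ⟨_, hsq, _⟩ := structure_lemma hgt hnp hdvd
    refine ⟨hn1, le_trans (by exact_mod_cast hnN) hN1, hsq, ?_⟩
    intro p hp
    exact le_trans (Finset.le_sup (f := id) hp) hsup
  -- S₂ bound
  have hS₂bound : (S₂.card : ℝ) ≤ 12 * x / Real.sqrt y := S2_bound x N y hN1 hy1
  -- numeric lemmas
  set s : ℝ := Real.sqrt L with hsdef
  set t : ℝ := Real.sqrt s with htdef
  have hs0 : 0 ≤ s := Real.sqrt_nonneg _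
  have hs2 : s ^ 2 = L := Real.sq_sqrt (by linarith)
  have ht2 : t ^ 2 = s := Real.sq_sqrt hs0
  have hs1000 : 1000 ≤ s := by
    have h1 : Real.sqrt 1000000 ≤ s := Real.sqrt_le_sqrt (by linarith)
    rwa [show (1000000:ℝ) = 1000^2 by norm_num, Real.sqrt_sq (by norm_num)] at h1
  have ht0 : 0 ≤ t := Real.sqrt_nonneg _
  have ht1 : 1 ≤ t := by nlinarith [ht2, hs1000, ht0]
  have hts : t ≤ s := by
    calc t = t * 1 := by ring
    _ ≤ t * t := by nlinarith [ht0, ht1]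
    _ = t ^ 2 := by ring
    _ = s := ht2
  have hLexp : (480 + 12 * c) ^ 2 + (192 / ε) ^ 2 + 1000000 ≤ L := by
    rw [← hL₀]; exact hLL0
  have hsge : 480 + 12 * c ≤ s := by
    have h1 : Real.sqrt ((480 + 12*c)^2) ≤ s := by
      apply Real.sqrt_le_sqrt
      have h2 : (0:ℝ) ≤ (192/ε)^2 := by positivity
      linarith
    rwa [Real.sqrt_sq (by positivity)] at h1
  have hsge2 : 192 / ε ≤ s := by
    have h1 : Real.sqrt ((192/ε)^2) ≤ s := by
      apply Real.sqrt_le_sqrt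
      have h2 : (0:ℝ) ≤ (480 + 12*c)^2 := by positivity
      linarith
    rwa [Real.sqrt_sq (by positivity)] at h1
  have hεs : 192 ≤ ε * s := by
    rw [div_le_iff₀ hε] at hsge2
    linarith [hsge2]
  have hlogL0 : 0 < Real.log L := Real.log_pos (by linarith)
  have hlogL : Real.log L ≤ 4 * t := by
    have ht4 : t ^ 4 = L := by
      rw [show t^4 = (t^2)^2 by ring, ht2, hs2]
    have h1 : Real.log L = 4 * Real.log t := by
      rw [← ht4, Real.log_pow]
      push_cast; ring
    have h2 : Real.log t ≤ t - 1 := Real.log_le_sub_one_of_pos (by linarith)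
    linarith
  -- Key bound (B): exponential term
  have hlogy0 : 0 < Real.log y := by
    apply Real.log_pos
    have : (16:ℝ) ≤ (y:ℝ) := by exact_mod_cast hy16
    linarith
  have hy0 : (0:ℝ) < (y:ℝ) := by
    have : (1:ℕ) ≤ y := hy1
    exact_mod_cast this
  have hlogy3 : Real.log y ≤ 3 * Real.log L := by
    have h1 : Real.log y ≤ Real.log (L^3) := Real.log_le_log hy0 hyU
    rwa [Real.log_pow, Nat.cast_ofNat] at h1
  have hKey1 : (c + 10 * Real.log L) * (3 * Real.log L) ≤ L := by
    have hq1 : (c + 10 * Real.log L) * (3 * Real.log L) ≤ (c + 40 * t) * (12 * t) := by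
      apply mul_le_mul (by linarith) (by linarith) (by positivity) (by positivity)
    have hq2 : (c + 40 * t) * (12 * t) ≤ 12 * s * c + 480 * s := by nlinarith [ht2, hts, hc0, ht0, hs0]
    have hq3 : 12 * s * c + 480 * s ≤ L := by nlinarith [hs2, hsge, hs0, hc0]
    linarith
  have hKey2 : c + 10 * Real.log L ≤ L / (3 * Real.log L) := by
    rw [le_div_iff₀ (by positivity)]
    exact hKey1
  have hKey3 : (8 / ε) * L ^ 10 ≤ Real.exp (L / (3 * Real.log L)) := by
    have hpos : (0:ℝ) < (8 / ε) * L ^ 10 := by positivity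
    have hlg : Real.log ((8 / ε) * L ^ 10) = Real.log (8 / ε) + 10 * Real.log L := by
      rw [Real.log_mul (by positivity) (by positivity), Real.log_pow]
      push_cast; ring
    have h2 : Real.log ((8 / ε) * L ^ 10) ≤ L / (3 * Real.log L) := by
      rw [hlg]
      have : Real.log (8/ε) ≤ c := le_max_left _ _
      linarith
    calc (8 / ε) * L ^ 10 = Real.exp (Real.log ((8 / ε) * L ^ 10)) := (Real.exp_log hpos).symm
    _ ≤ Real.exp (L / (3 * Real.log L)) := Real.exp_le_exp.2 h2
  have hB1 : Real.exp (-(L / (3 * Real.log L))) * L ^ 9 ≤ ε / (8 * L) := by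
    have hexppos : (0:ℝ) < Real.exp (L / (3 * Real.log L)) := Real.exp_pos _
    have h1 : Real.exp (-(L / (3 * Real.log L))) ≤ ((8 / ε) * L ^ 10)⁻¹ := by
      rw [Real.exp_neg]
      apply inv_anti₀ (by positivity) hKey3
    have h2 : ((8 / ε) * L ^ 10)⁻¹ * L ^ 9 = ε / (8 * L) := by
      field_simp
    calc Real.exp (-(L / (3 * Real.log L))) * L ^ 9 ≤ ((8 / ε) * L ^ 10)⁻¹ * L ^ 9 := by
          apply mul_le_mul_of_nonneg_right h1 (by positivity)
    _ = ε / (8 * L) := h2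
  have hB : x * Real.exp (- L / Real.log y) * (y : ℝ) ^ 3 ≤ x * (ε / (8 * L)) := by
    have hdiv : L / (3 * Real.log L) ≤ L / Real.log y :=
      div_le_div_of_nonneg_left (by linarith) hlogy0 hlogy3
    have hexp : Real.exp (- L / Real.log y) ≤ Real.exp (-(L / (3 * Real.log L))) := by
      apply Real.exp_le_exp.2
      rw [neg_div]
      linarith
    have hy3 : (y:ℝ) ^ 3 ≤ L ^ 9 := by
      calc (y:ℝ)^3 ≤ (L^3)^3 := by
            apply pow_le_pow_left₀ (by positivity) hyU
      _ = L ^ 9 := by ring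
    have hmain : Real.exp (- L / Real.log y) * (y : ℝ) ^ 3 ≤ ε / (8 * L) := by
      calc Real.exp (- L / Real.log y) * (y : ℝ) ^ 3
          ≤ Real.exp (-(L / (3 * Real.log L))) * L ^ 9 := by
            apply mul_le_mul hexp hy3 (by positivity) (by positivity)
      _ ≤ ε / (8 * L) := hB1
    calc x * Real.exp (- L / Real.log y) * (y : ℝ) ^ 3
        = x * (Real.exp (- L / Real.log y) * (y : ℝ) ^ 3) := by ring
    _ ≤ x * (ε / (8 * L)) := mul_le_mul_of_nonneg_left hmain (by positivity)
  -- bound (A)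
  have hA : 12 * x / Real.sqrt y ≤ x * (ε / (8 * L)) := by
    have hyhalf : L ^ 3 / 2 ≤ (y:ℝ) := by linarith
    have hsqy0 : (0:ℝ) < Real.sqrt y := Real.sqrt_pos.2 hy0
    have hs6 : s ^ 6 = L ^ 3 := by rw [← hs2]; ring
    have hs3 : s ^ 3 / 2 ≤ Real.sqrt y := by
      have h1 : (s ^ 3 / 2) ^ 2 ≤ (y:ℝ) := by
        have e : (s ^ 3 / 2) ^ 2 = s ^ 6 / 4 := by ring
        rw [e, hs6]
        linarith [hyhalf, hL3big]
      calc s ^ 3 / 2 = Real.sqrt ((s ^ 3 / 2) ^ 2) := (Real.sqrt_sq (by positivity)).symm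
      _ ≤ Real.sqrt y := Real.sqrt_le_sqrt h1
    have h96 : 96 * L ≤ ε * Real.sqrt y := by
      have h1 : ε * (s ^ 3 / 2) ≤ ε * Real.sqrt y := mul_le_mul_of_nonneg_left hs3 (le_of_lt hε)
      have h3 : 192 * s ^ 2 ≤ (ε * s) * s ^ 2 := mul_le_mul_of_nonneg_right hεs (sq_nonneg s)
      have h4 : ε * (s ^ 3 / 2) = (ε * s) * s ^ 2 / 2 := by ring
      linarith [h1, h3, h4, hs2]
    have hfrac : 12 / Real.sqrt y ≤ ε / (8 * L) := by
      rw [div_le_div_iff₀ hsqy0 (by positivity)]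
      linarith [h96]
    calc 12 * x / Real.sqrt y = x * (12 / Real.sqrt y) := by ring
    _ ≤ x * (ε / (8 * L)) := mul_le_mul_of_nonneg_left hfrac (by positivity)
  -- final assembly
  have hcards : (S.card : ℝ) = (S₁.card : ℝ) + (S₂.card : ℝ) := by
    exact_mod_cast hsplit.symm
  calc (S.card : ℝ) = (S₁.card : ℝ) + (S₂.card : ℝ) := hcards
  _ ≤ (x * Real.exp (- L / Real.log y) * (y : ℝ) ^ 3) + 12 * x / Real.sqrt y := by
      linarith
  _ ≤ x * (ε / (8 * L)) + x * (ε / (8 * L)) := by linarith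
  _ = ε * (x / (4 * L)) := by ring
  _ ≤ ε * (π : ℝ) := mul_le_mul_of_nonneg_left hπ (le_of_lt hε)
end

section
/- With r = r(t) = 1 − (log log log t)/(log log t), the sum of p^{-r} over primes p ≤ 2 log t is O(log log t / log log log t) as t → ∞. -/
set_option maxHeartbeats 1000000

open Finset

lemma my_harmonic_le (n : ℕ) : ∑ j ∈ Finset.Icc 1 n, (1:ℝ)/j ≤ 1 + Real.log n := by
  induction n with
  | zero => simp
  | succ n ih =>
    rcases Nat.eq_zero_or_pos n with h0 | hn
    · subst h0; simp
    · rw [Finset.sum_Icc_succ_top (by omega : 1 ≤ n + 1)]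
      have hlog : Real.log n + 1/(n+1) ≤ Real.log (n+1) := by
        have h1 : Real.log ((n:ℝ)/(n+1)) ≤ (n:ℝ)/(n+1) - 1 :=
          Real.log_le_sub_one_of_pos (by positivity)
        have h2 : Real.log ((n:ℝ)/(n+1)) = Real.log n - Real.log (n+1) :=
          Real.log_div (by positivity) (by positivity)
        have h3 : (n:ℝ)/(n+1) - 1 = -(1/(n+1)) := by field_simp; ring
        rw [h2, h3] at h1
        linarith
      push_cast
      push_cast at ih hlog
      linarith

lemma my_block_card (j : ℕ) :
    j * ((Finset.range (2^(j+1))).filter (fun p => Nat.Prime p ∧ 2^j ≤ p)).card ≤ 2^(j+2) := by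
  set S := (Finset.range (2^(j+1))).filter (fun p => Nat.Prime p ∧ 2^j ≤ p) with hS
  have h1 : (2^j) ^ S.card ≤ ∏ p ∈ S, p := by
    apply Finset.pow_card_le_prod
    intro p hp
    exact (Finset.mem_filter.mp hp).2.2
  have h2 : ∏ p ∈ S, p ≤ primorial (2^(j+1) - 1) := by
    have heq : primorial (2^(j+1) - 1) = ∏ p ∈ (Finset.range (2^(j+1))).filter Nat.Prime, p := by
      unfold primorial
      have h : 2^(j+1) - 1 + 1 = 2^(j+1) := by
        have : (1:ℕ) ≤ 2^(j+1) := Nat.one_le_two_pow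
        omega
      rw [h]
    rw [heq]
    apply Finset.prod_le_prod_of_subset_of_one_le'
    · intro p hp
      simp only [hS, Finset.mem_filter] at hp ⊢
      exact ⟨hp.1, hp.2.1⟩
    · intro p hp _
      exact ((Finset.mem_filter.mp hp).2).one_lt.le
  have h3 : primorial (2^(j+1) - 1) ≤ 4 ^ (2^(j+1) - 1) := primorial_le_4_pow _
  have h4 : (4:ℕ) ^ (2^(j+1) - 1) ≤ 2 ^ (2^(j+2)) := by
    have h44 : (4:ℕ) = 2^2 := rfl
    rw [h44, ← pow_mul]
    apply Nat.pow_le_pow_right (by norm_num)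
    have : (1:ℕ) ≤ 2^(j+1) := Nat.one_le_two_pow
    calc 2 * (2^(j+1) - 1) ≤ 2 * 2^(j+1) := by omega
    _ = 2^(j+2) := by ring
  have h5 : (2:ℕ) ^ (j * S.card) ≤ 2 ^ (2^(j+2)) := by
    rw [pow_mul]
    exact le_trans h1 (le_trans h2 (le_trans h3 h4))
  exact (Nat.pow_le_pow_iff_right (by norm_num)).mp h5

lemma my_log_le_sqrt {y : ℝ} (hy : 1 ≤ y) : Real.log y ≤ 2 * Real.sqrt y := by
  have hs : 0 < Real.sqrt y := Real.sqrt_pos.mpr (by linarith)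
  have h1 : Real.log y = 2 * Real.log (Real.sqrt y) := by
    rw [Real.log_sqrt (by linarith)]
    ring
  have h2 : Real.log (Real.sqrt y) ≤ Real.sqrt y - 1 := Real.log_le_sub_one_of_pos hs
  nlinarith

theorem prime_sum_small_exponent_bound :
    ∃ C : ℝ, ∃ t₀ : ℝ, ∀ t : ℝ, t₀ ≤ t →
      ∑ p ∈ (Finset.range (⌊2 * Real.log t⌋₊ + 1)).filter (fun p => p.Prime),
          (p : ℝ) ^ (-(1 - Real.log (Real.log (Real.log t)) / Real.log (Real.log t)))
        ≤ C * (Real.log (Real.log t) / Real.log (Real.log (Real.log t))) := by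
  refine ⟨100, Real.exp (Real.exp (2^24)), fun t ht => ?_⟩
  set L := Real.log t with hLdef
  set LL := Real.log L with hLLdef
  set LLL := Real.log LL with hLLLdef
  have hL : Real.exp (2^24) ≤ L := by
    rw [hLdef, ← Real.log_exp (Real.exp (2^24))]
    exact Real.log_le_log (Real.exp_pos _) ht
  have hLL : (2^24:ℝ) ≤ LL := by
    rw [hLLdef, ← Real.log_exp (2^24:ℝ)]
    exact Real.log_le_log (Real.exp_pos _) hL
  have hLpos : (0:ℝ) < L := lt_of_lt_of_le (Real.exp_pos _) hL
  have hLLpos : (0:ℝ) < LL := by norm_num at hLL ⊢; linarith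
  have hLLL : (16:ℝ) ≤ LLL := by
    have h1 : Real.log (2^24:ℝ) ≤ LLL := by
      rw [hLLLdef]
      exact Real.log_le_log (by norm_num) hLL
    have h2 : Real.log (2^24:ℝ) = 24 * Real.log 2 := by
      rw [show ((2:ℝ)^24) = (2:ℝ)^(24:ℕ) by norm_num, Real.log_pow]
      norm_num
    have := Real.log_two_gt_d9
    rw [h2] at h1
    linarith
  have hLLLpos : (0:ℝ) < LLL := by linarith
  -- sqrt facts
  have hsLL : (4096:ℝ) ≤ Real.sqrt LL := by
    rw [show (4096:ℝ) = Real.sqrt (4096^2) by rw [Real.sqrt_sq (by norm_num)]]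
    apply Real.sqrt_le_sqrt
    norm_num at hLL ⊢
    linarith
  have hsLLpos : (0:ℝ) < Real.sqrt LL := by linarith
  -- LLL^2 ≤ sqrt LL
  have hkey : LLL^2 ≤ Real.sqrt LL := by
    set u := Real.sqrt (Real.sqrt (Real.sqrt LL)) with hu
    have hu0 : 0 < u := by
      rw [hu]
      positivity
    have hu2 : u * u = Real.sqrt (Real.sqrt LL) := Real.mul_self_sqrt (Real.sqrt_nonneg _)
    have h4 : Real.sqrt (Real.sqrt LL) * Real.sqrt (Real.sqrt LL) = Real.sqrt LL :=
      Real.mul_self_sqrt (Real.sqrt_nonneg _)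
    have h64 : (64:ℝ) ≤ Real.sqrt (Real.sqrt LL) := by
      rw [show (64:ℝ) = Real.sqrt (64^2) by rw [Real.sqrt_sq (by norm_num)]]
      apply Real.sqrt_le_sqrt
      nlinarith
    have hlogu : LLL = 8 * Real.log u := by
      rw [hu, Real.log_sqrt (Real.sqrt_nonneg _), Real.log_sqrt (Real.sqrt_nonneg _),
        Real.log_sqrt hLLpos.le]
      ring
    have hub : LLL ≤ 8 * u := by
      have := Real.log_le_sub_one_of_pos hu0
      rw [hlogu]
      linarith
    nlinarith [sq_nonneg (LLL - 8*u)]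
  -- delta
  set δ := LLL / LL with hδdef
  have hδpos : 0 < δ := div_pos hLLLpos hLLpos
  have hδhalf : δ ≤ 1/2 := by
    have h1 : LLL ≤ 2 * Real.sqrt LL := my_log_le_sqrt (by linarith)
    have h2 : Real.sqrt LL * Real.sqrt LL = LL := Real.mul_self_sqrt hLLpos.le
    rw [hδdef, div_le_iff₀ hLLpos]
    nlinarith
  -- x and J
  set x := ⌊2 * L⌋₊ with hxdef
  have hx2L : (x:ℝ) ≤ 2 * L := Nat.floor_le (by positivity)
  have hLx : L ≤ (x:ℝ) := by
    have h1 : 2 * L < (x:ℝ) + 1 := Nat.lt_floor_add_one _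
    have hL1 : (1:ℝ) ≤ L := by
      have := Real.one_le_exp (show (0:ℝ) ≤ 2^24 by norm_num)
      linarith
    linarith
  have hx1 : 1 ≤ x := by
    have : (1:ℝ) ≤ (x:ℝ) := by
      have := Real.one_le_exp (show (0:ℝ) ≤ 2^24 by norm_num)
      linarith
    exact_mod_cast this
  set J := Nat.log 2 x with hJdef
  have hJx : (2:ℕ)^J ≤ x := Nat.pow_log_le_self 2 (by omega)
  have hxJ : x < 2^(J+1) := Nat.lt_pow_succ_log_self (by norm_num) x
  have hl2a : (0.6931:ℝ) < Real.log 2 := by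
    have := Real.log_two_gt_d9; linarith
  have hl2b : Real.log 2 < 0.6932 := by
    have := Real.log_two_lt_d9; linarith
  -- J lower bound
  have hJ_lb : LL ≤ (J:ℝ) := by
    have h1 : L < ((2:ℕ)^(J+1) : ℝ) := by
      calc L ≤ (x:ℝ) := hLx
      _ < ((2:ℕ)^(J+1) : ℝ) := by exact_mod_cast hxJ
    have h2 : LL ≤ Real.log ((2:ℕ)^(J+1) : ℝ) := by
      rw [hLLdef]
      exact Real.log_le_log hLpos h1.le
    have h3 : Real.log ((2:ℕ)^(J+1) : ℝ) = (J+1 : ℝ) * Real.log 2 := by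
      push_cast
      rw [Real.log_pow]
      push_cast
      ring
    rw [h3] at h2
    have hJ0 : (0:ℝ) ≤ (J:ℝ) := Nat.cast_nonneg _
    nlinarith
  have hJpos : 0 < J := by
    have : (0:ℝ) < (J:ℝ) := by linarith
    exact_mod_cast this
  -- J upper bound
  have hJ_ub : (J:ℝ) ≤ 2 * LL := by
    have h1 : ((2:ℕ)^J : ℝ) ≤ 2 * L := by
      calc ((2:ℕ)^J : ℝ) ≤ (x:ℝ) := by exact_mod_cast hJx
      _ ≤ 2 * L := hx2L
    have h2 : (J:ℝ) * Real.log 2 ≤ Real.log (2 * L) := by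
      rw [show (J:ℝ) * Real.log 2 = Real.log (((2:ℕ)^J : ℕ) : ℝ) by
        push_cast; rw [Real.log_pow]]
      apply Real.log_le_log (by positivity)
      exact_mod_cast h1
    have h3 : Real.log (2 * L) = Real.log 2 + LL := Real.log_mul (by norm_num) hLpos.ne'
    rw [h3] at h2
    have hJ0 : (0:ℝ) ≤ (J:ℝ) := Nat.cast_nonneg _
    nlinarith
  -- b
  set b := (2:ℝ) ^ δ with hbdef
  have hbexp : b = Real.exp (Real.log 2 * δ) := Real.rpow_def_of_pos (by norm_num) δ
  have hb1 : 1 + δ/2 ≤ b := by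
    have h1 := Real.add_one_le_exp (Real.log 2 * δ)
    rw [hbexp]
    nlinarith [hδpos.le, hl2a]
  have hb1' : (1:ℝ) ≤ b := by linarith
  have hb2 : b ≤ 2 := by
    calc b = (2:ℝ) ^ δ := hbdef
    _ ≤ (2:ℝ) ^ (1:ℝ) := Real.rpow_le_rpow_of_exponent_le one_le_two (by linarith)
    _ = 2 := Real.rpow_one 2
  -- b^J ≤ 2 * LL
  have hbJ : b^J ≤ 2 * LL := by
    have h1 : b^J = ((2:ℝ)^(J:ℕ)) ^ δ := by
      rw [hbdef, ← Real.rpow_natCast ((2:ℝ)^δ) J, ← Real.rpow_natCast (2:ℝ) J,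
        ← Real.rpow_mul (by norm_num), ← Real.rpow_mul (by norm_num), mul_comm]
    have h2 : ((2:ℝ)^(J:ℕ)) ^ δ ≤ (2*L) ^ δ := by
      apply Real.rpow_le_rpow (by positivity) _ hδpos.le
      calc ((2:ℝ)^(J:ℕ)) = ((2:ℕ)^J : ℝ) := by push_cast; ring
      _ ≤ (x:ℝ) := by exact_mod_cast hJx
      _ ≤ 2*L := hx2L
    have h3 : (2*L) ^ δ = (2:ℝ)^δ * L^δ := Real.mul_rpow (by norm_num) hLpos.le
    have h4 : L ^ δ = LL := by
      rw [Real.rpow_def_of_pos hLpos, ← hLLdef, hδdef]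
      rw [show LL * (LLL/LL) = LLL by field_simp]
      exact Real.exp_log hLLpos
    have h5 : (2:ℝ)^δ ≤ 2 := hb2
    rw [h1]
    calc ((2:ℝ)^(J:ℕ)) ^ δ ≤ (2*L) ^ δ := h2
    _ = (2:ℝ)^δ * LL := by rw [h3, h4]
    _ ≤ 2 * LL := by nlinarith
  -- fiber decomposition
  set P := (Finset.range (x+1)).filter (fun p => Nat.Prime p) with hPdef
  have hmap : ∀ p ∈ P, Nat.log 2 p ∈ Finset.range (J+1) := by
    intro p hp
    rw [Finset.mem_range]
    have hpx : p ≤ x := by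
      have h := (Finset.mem_filter.mp hp).1
      rw [Finset.mem_range] at h
      omega
    have := Nat.log_mono_right (b := 2) hpx
    omega
  have fiber_bound : ∀ j ∈ Finset.range (J+1),
      ∑ p ∈ P with Nat.log 2 p = j, (p:ℝ)^(-(1-δ)) ≤ 4*b^j/(j:ℝ) := by
    intro j _
    rcases Nat.eq_zero_or_pos j with rfl | hj1
    · have hempty : (P.filter (fun p => Nat.log 2 p = 0)) = ∅ := by
        rw [Finset.filter_eq_empty_iff]
        intro p hp heq
        have hp2 := (Finset.mem_filter.mp hp).2.two_le
        rcases Nat.log_eq_zero_iff.mp heq with h | h <;> omega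
      rw [show (P.filter (fun p => Nat.log 2 p = 0)) = ∅ from hempty, Finset.sum_empty]
      norm_num
    · have hsub : P.filter (fun p => Nat.log 2 p = j)
          ⊆ (Finset.range (2^(j+1))).filter (fun p => Nat.Prime p ∧ 2^j ≤ p) := by
        intro p hp
        simp only [hPdef, Finset.mem_filter, Finset.mem_range] at hp ⊢
        obtain ⟨⟨hpx, hpp⟩, hlog⟩ := hp
        refine ⟨?_, hpp, ?_⟩
        · have h := Nat.lt_pow_succ_log_self (b := 2) (by norm_num) p
          rw [hlog] at h; exact h
        · have h := Nat.pow_log_le_self 2 hpp.pos.ne'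
          rw [hlog] at h; exact h
      set F := P.filter (fun p => Nat.log 2 p = j) with hF
      have hjR : (0:ℝ) < (j:ℝ) := by exact_mod_cast hj1
      have hcardnat : j * F.card ≤ 2^(j+2) :=
        le_trans (Nat.mul_le_mul_left j (Finset.card_le_card hsub)) (my_block_card j)
      have hcard : (F.card : ℝ) ≤ 2^(j+2)/(j:ℝ) := by
        rw [le_div_iff₀ hjR]
        calc (F.card:ℝ) * (j:ℝ) = ((j * F.card : ℕ) : ℝ) := by push_cast; ring
        _ ≤ ((2^(j+2) : ℕ) : ℝ) := by exact_mod_cast hcardnat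
        _ = 2^(j+2) := by push_cast; ring
      have hterm : ∀ p ∈ F, (p:ℝ)^(-(1-δ)) ≤ b^j/2^j := by
        intro p hp
        have hmem := hsub hp
        simp only [Finset.mem_filter, Finset.mem_range] at hmem
        have h2p : ((2:ℝ)^j) ≤ (p:ℝ) := by exact_mod_cast hmem.2.2
        have h2jpos : (0:ℝ) < (2:ℝ)^j := by positivity
        have h1 : (p:ℝ)^(-(1-δ)) ≤ ((2:ℝ)^j)^(-(1-δ)) :=
          Real.rpow_le_rpow_of_nonpos h2jpos h2p (by linarith)
        have h2 : ((2:ℝ)^j)^(-(1-δ)) = b^j/(2:ℝ)^j := by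
          rw [show -(1-δ) = δ - 1 by ring, Real.rpow_sub h2jpos, Real.rpow_one]
          congr 1
          rw [← Real.rpow_natCast (2:ℝ) j, ← Real.rpow_mul (by norm_num : (0:ℝ) ≤ 2),
            mul_comm (j:ℝ) δ, Real.rpow_mul (by norm_num : (0:ℝ) ≤ 2), Real.rpow_natCast]
        rw [h2] at h1; exact h1
      have hsum := Finset.sum_le_card_nsmul F _ _ hterm
      rw [nsmul_eq_mul] at hsum
      calc ∑ p ∈ F, (p:ℝ)^(-(1-δ)) ≤ (F.card:ℝ) * (b^j/2^j) := hsum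
      _ ≤ (2^(j+2)/(j:ℝ)) * (b^j/2^j) :=
          mul_le_mul_of_nonneg_right hcard (by positivity)
      _ = 4*b^j/(j:ℝ) := by
          rw [pow_add]
          field_simp
          ring
  have hfib : ∑ j ∈ Finset.range (J+1), ∑ p ∈ P with Nat.log 2 p = j, (p:ℝ)^(-(1-δ))
      = ∑ p ∈ P, (p:ℝ)^(-(1-δ)) := Finset.sum_fiberwise_of_maps_to hmap _
  -- drop j = 0
  have hIcc : ∑ j ∈ Finset.range (J+1), 4*b^j/(j:ℝ) = ∑ j ∈ Finset.Icc 1 J, 4*b^j/(j:ℝ) := by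
    symm
    apply Finset.sum_subset
    · intro j hj
      rw [Finset.mem_Icc] at hj
      rw [Finset.mem_range]
      omega
    · intro j hj hnot
      have hj0 : j = 0 := by
        rw [Finset.mem_range] at hj
        rw [Finset.mem_Icc] at hnot
        omega
      subst hj0
      norm_num
  -- split at K
  set K := J/2 with hKdef
  have hJ2 : 2 ≤ J := by
    have h : (2:ℝ) ≤ (J:ℝ) := by
      norm_num at hLL
      linarith
    exact_mod_cast h
  have hK1 : 1 ≤ K := by omega
  have hKJ : K ≤ J := Nat.div_le_self _ _
  have hsplit := Finset.sum_Ioc_consecutive (fun j => 4*b^j/(j:ℝ)) (Nat.zero_le K) hKJ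
  -- part 1
  have hbK : b^K ≤ Real.sqrt (2*LL) := by
    apply Real.le_sqrt_of_sq_le
    have h2K : b^K * b^K ≤ b^J := by
      rw [← pow_add]
      apply pow_le_pow_right₀ hb1'
      omega
    nlinarith
  have hbKnonneg : (0:ℝ) ≤ b^K := pow_nonneg (by linarith) K
  have hlogK : 1 + Real.log K ≤ 2 * LLL := by
    have h1 : Real.log K ≤ Real.log J := Real.log_le_log (by exact_mod_cast hK1) (by exact_mod_cast hKJ)
    have h2 : Real.log J ≤ Real.log (2*LL) := Real.log_le_log (by exact_mod_cast hJpos) hJ_ub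
    have h3 : Real.log (2*LL) = Real.log 2 + LLL := Real.log_mul (by norm_num) hLLpos.ne'
    linarith
  have hpart1 : ∑ j ∈ Finset.Ioc 0 K, 4*b^j/(j:ℝ) ≤ 12 * (LL/LLL) := by
    have hstep : ∀ j ∈ Finset.Ioc 0 K, 4*b^j/(j:ℝ) ≤ 4*b^K * (1/(j:ℝ)) := by
      intro j hj
      rw [Finset.mem_Ioc] at hj
      have hj0 : (0:ℝ) < (j:ℝ) := by exact_mod_cast hj.1
      have hbj : b^j ≤ b^K := pow_le_pow_right₀ hb1' hj.2
      rw [div_eq_mul_one_div (4*b^j) (j:ℝ)]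
      apply mul_le_mul_of_nonneg_right (by linarith) (by positivity)
    calc ∑ j ∈ Finset.Ioc 0 K, 4*b^j/(j:ℝ) ≤ ∑ j ∈ Finset.Ioc 0 K, 4*b^K * (1/(j:ℝ)) :=
        Finset.sum_le_sum hstep
    _ = 4*b^K * ∑ j ∈ Finset.Ioc 0 K, 1/(j:ℝ) := by rw [Finset.mul_sum]
    _ ≤ 4*b^K * (1 + Real.log K) := by
        apply mul_le_mul_of_nonneg_left _ (by positivity)
        rw [← Finset.Icc_add_one_left_eq_Ioc]
        exact my_harmonic_le K
    _ ≤ 4*Real.sqrt (2*LL) * (2*LLL) := by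
        apply mul_le_mul (by linarith) hlogK (by linarith [Real.log_nonneg (show (1:ℝ) ≤ (K:ℝ) by exact_mod_cast hK1)]) (by positivity)
    _ ≤ 12 * (LL/LLL) := by
        have hsq2 : Real.sqrt (2*LL) ≤ 1.5 * Real.sqrt LL := by
          rw [Real.sqrt_mul (by norm_num) LL]
          have h15 : Real.sqrt 2 ≤ 1.5 := by
            rw [show (1.5:ℝ) = Real.sqrt (1.5^2) by rw [Real.sqrt_sq (by norm_num)]]
            apply Real.sqrt_le_sqrt
            norm_num
          nlinarith [Real.sqrt_nonneg LL]
        have hmul : Real.sqrt LL * LLL ≤ LL / LLL := by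
          rw [le_div_iff₀ hLLLpos]
          have h2 : Real.sqrt LL * Real.sqrt LL = LL := Real.mul_self_sqrt hLLpos.le
          nlinarith
        have hsnn : (0:ℝ) ≤ Real.sqrt LL := Real.sqrt_nonneg _
        nlinarith [div_nonneg hLLpos.le hLLLpos.le]
  -- part 2
  have hbnn : (0:ℝ) ≤ b := by linarith
  have hJR : (0:ℝ) < (J:ℝ) := by exact_mod_cast hJpos
  have hgeom : ∑ j ∈ Finset.range (J+1), b^j ≤ 4*b^J/δ := by
    have hbgt : 1 < b := by linarith
    rw [geom_sum_eq hbgt.ne' (J+1)]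
    rw [div_le_div_iff₀ (by linarith) hδpos]
    have hpow : b^(J+1) = b^J * b := pow_succ b J
    have hbJnn : (0:ℝ) ≤ b^J := pow_nonneg hbnn J
    have k1 : 2*(b^J)*δ ≤ 4*(b^J)*(b-1) := by
      calc 2*(b^J)*δ = 4*(b^J)*(δ/2) := by ring
      _ ≤ 4*(b^J)*(b-1) :=
          mul_le_mul_of_nonneg_left (by linarith) (by linarith)
    have h25 : b^(J+1) ≤ 2*b^J := by
      rw [hpow]
      calc b^J*b ≤ b^J*2 := mul_le_mul_of_nonneg_left hb2 hbJnn
      _ = 2*b^J := by ring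
    have k2 : (b^(J+1)-1)*δ ≤ 2*(b^J)*δ :=
      mul_le_mul_of_nonneg_right (by linarith) hδpos.le
    linarith
  have hpart2 : ∑ j ∈ Finset.Ioc K J, 4*b^j/(j:ℝ) ≤ 64 * (LL/LLL) := by
    have hjbig : ∀ j ∈ Finset.Ioc K J, 4*b^j/(j:ℝ) ≤ (8/(J:ℝ)) * b^j := by
      intro j hj
      rw [Finset.mem_Ioc] at hj
      have h2j : (J:ℝ) ≤ 2*(j:ℝ) := by
        have h : J ≤ 2*j := by omega
        exact_mod_cast h
      have hj0 : (0:ℝ) < (j:ℝ) := by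
        have : 0 < j := by omega
        exact_mod_cast this
      have hbj0 : (0:ℝ) ≤ b^j := pow_nonneg hbnn j
      calc 4*b^j/(j:ℝ) = 4*b^j * (1/(j:ℝ)) := by ring
      _ ≤ 4*b^j * (2/(J:ℝ)) := by
          apply mul_le_mul_of_nonneg_left _ (by positivity)
          rw [div_le_div_iff₀ hj0 hJR]
          linarith
      _ = (8/(J:ℝ)) * b^j := by ring
    calc ∑ j ∈ Finset.Ioc K J, 4*b^j/(j:ℝ) ≤ ∑ j ∈ Finset.Ioc K J, (8/(J:ℝ))*b^j :=
        Finset.sum_le_sum hjbig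
    _ = (8/(J:ℝ)) * ∑ j ∈ Finset.Ioc K J, b^j := by rw [Finset.mul_sum]
    _ ≤ (8/(J:ℝ)) * ∑ j ∈ Finset.range (J+1), b^j := by
        apply mul_le_mul_of_nonneg_left _ (div_nonneg (by norm_num) hJR.le)
        apply Finset.sum_le_sum_of_subset_of_nonneg
        · intro j hj
          rw [Finset.mem_Ioc] at hj
          rw [Finset.mem_range]
          omega
        · intro j _ _
          exact pow_nonneg hbnn j
    _ ≤ (8/(J:ℝ)) * (4*b^J/δ) :=
        mul_le_mul_of_nonneg_left hgeom (div_nonneg (by norm_num) hJR.le)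
    _ ≤ 64 * (LL/LLL) := by
        have heq : (8/(J:ℝ))*(4*b^J/δ) = 32*(b^J/(J:ℝ))*(1/δ) := by ring
        have hinv : 1/δ = LL/LLL := by
          rw [hδdef, one_div_div]
        have hdiv : b^J/(J:ℝ) ≤ 2 := by
          rw [div_le_iff₀ hJR]
          linarith
        rw [heq, hinv]
        have hnn : (0:ℝ) ≤ LL/LLL := div_nonneg hLLpos.le hLLLpos.le
        nlinarith
  -- assemble
  calc ∑ p ∈ P, (p:ℝ)^(-(1-δ)) = ∑ j ∈ Finset.range (J+1), ∑ p ∈ P with Nat.log 2 p = j, (p:ℝ)^(-(1-δ)) := hfib.symm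
  _ ≤ ∑ j ∈ Finset.range (J+1), 4*b^j/(j:ℝ) := Finset.sum_le_sum fiber_bound
  _ = ∑ j ∈ Finset.Icc 1 J, 4*b^j/(j:ℝ) := hIcc
  _ = ∑ j ∈ Finset.Ioc 0 K, 4*b^j/(j:ℝ) + ∑ j ∈ Finset.Ioc K J, 4*b^j/(j:ℝ) := by
      rw [show Finset.Icc 1 J = Finset.Ioc 0 J from Finset.Icc_add_one_left_eq_Ioc 0 J, ← hsplit]
  _ ≤ 12 * (LL/LLL) + 64 * (LL/LLL) := add_le_add hpart1 hpart2
  _ ≤ 100 * (LL/LLL) := by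
      have hnn : (0:ℝ) ≤ LL/LLL := div_nonneg hLLpos.le hLLLpos.le
      linarith
end
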